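/- arXiv:2510.20251 — 7 statements merged into one kernel-verified Lean document; each statement's English description precedes it below -/
import Mathlib

section
/- For integers n ≥ k ≥ 2, the Stirling number of the second kind satisfies S(n,k) ≥ (2^((n-1)/(k-1)) - 1) · S(n-1,k-1), where the exponent is the real number (n-1)/(k-1). -/
/-- Stirling numbers of the second kind. -/
def stirling : ℕ → ℕ → ℕ
  | 0, 0 => 1
  | 0, _ + 1 => 0
  | _ + 1, 0 => 0
  | n + 1, k + 1 => stirling n k + (k + 1) * stirling n (k + 1)

/-- Sum over partitions of `[n]` into `k` blocks of `∑ i 2^{|B_i|}`. -/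
def gaux : ℕ → ℕ → ℕ
  | 0, _ => 0
  | _ + 1, 0 => 0
  | n + 1, k + 1 => gaux n k + 2 * stirling n k + (k + 2) * gaux n (k + 1)

lemma stirling_eq_zero : ∀ n k : ℕ, n < k → stirling n k = 0 := by
  intro n
  induction n with
  | zero => intro k h; match k, h with | k+1, _ => rfl
  | succ n ih =>
    intro k h
    match k, h with
    | k+1, h =>
      have h1 : stirling n k = 0 := ih k (by omega)
      have h2 : stirling n (k+1) = 0 := ih (k+1) (by omega)
      simp [stirling, h1, h2]

lemma stirling_diag : ∀ n : ℕ, stirling n n = 1 := by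
  intro n
  induction n with
  | zero => rfl
  | succ n ih =>
    have h := stirling_eq_zero n (n+1) (by omega)
    simp [stirling, ih, h]

lemma gaux_identity : ∀ n k : ℕ, gaux n k = k * (stirling (n+1) (k+1) + stirling n k) := by
  intro n
  induction n with
  | zero =>
    intro k
    match k with
    | 0 => rfl
    | k+1 =>
      have h1 : stirling 0 (k+1) = 0 := rfl
      have h2 : stirling 0 (k+2) = 0 := rfl
      simp [gaux, stirling, h1, h2]
  | succ n ih =>
    intro k
    match k with
    | 0 => simp [gaux]
    | k+1 =>
      have e1 : gaux (n+1) (k+1) = gaux n k + 2 * stirling n k + (k + 2) * gaux n (k + 1) := rfl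
      rw [e1, ih k, ih (k+1)]
      have e2 : stirling (n+2) (k+2) = stirling (n+1) (k+1) + (k+2) * stirling (n+1) (k+2) := rfl
      have e3 : stirling (n+1) (k+1) = stirling n k + (k+1) * stirling n (k+1) := rfl
      rw [e2, e3]
      ring

lemma key_b (k : ℕ) : ((k:ℝ)+1) * (2:ℝ) ^ ((1:ℝ)/((k:ℝ)+1)) ≤ (k:ℝ)+2 := by
  have hk : (0:ℝ) < (k:ℝ)+1 := by positivity
  have hbern := one_add_mul_le_pow (a := 1/((k:ℝ)+1))
    (le_trans (by norm_num : (-2:ℝ) ≤ 0) (by positivity)) (k+1)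
  have h2 : (2:ℝ) ≤ (1 + 1/((k:ℝ)+1)) ^ (k+1 : ℕ) := by
    have : (1:ℝ) + (k+1 : ℕ) * (1/((k:ℝ)+1)) = 2 := by
      push_cast
      field_simp
      norm_num
    linarith [hbern, this ▸ hbern]
  have h3 : (2:ℝ) ^ ((1:ℝ)/((k:ℝ)+1)) ≤ ((1 + 1/((k:ℝ)+1)) ^ (k+1 : ℕ)) ^ ((1:ℝ)/((k:ℝ)+1)) :=
    Real.rpow_le_rpow (by norm_num) h2 (by positivity)
  rw [← Real.rpow_natCast (1 + 1/((k:ℝ)+1)) (k+1), ← Real.rpow_mul (by positivity)] at h3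
  have he : ((k+1 : ℕ) : ℝ) * ((1:ℝ)/((k:ℝ)+1)) = 1 := by
    push_cast
    field_simp
  rw [he, Real.rpow_one] at h3
  have := mul_le_mul_of_nonneg_left h3 hk.le
  have hexp : ((k:ℝ)+1) * (1 + 1/((k:ℝ)+1)) = (k:ℝ)+2 := by field_simp; ring
  linarith [hexp ▸ this]

lemma key_a (n k : ℕ) (hk : 1 ≤ k) :
    ((k:ℝ)+1) * (2:ℝ) ^ (((n:ℝ)+1)/((k:ℝ)+1)) ≤ (k:ℝ) * (2:ℝ) ^ ((n:ℝ)/(k:ℝ)) + 2 := by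
  have hk0 : (0:ℝ) < (k:ℝ) := by exact_mod_cast hk
  have hk1 : (0:ℝ) < (k:ℝ)+1 := by positivity
  have hgm := Real.geom_mean_le_arith_mean2_weighted
    (w₁ := (k:ℝ)/((k:ℝ)+1)) (w₂ := 1/((k:ℝ)+1))
    (p₁ := (2:ℝ) ^ ((n:ℝ)/(k:ℝ))) (p₂ := 2)
    (by positivity) (by positivity) (by positivity) (by norm_num) (by field_simp)
  rw [← Real.rpow_mul (by norm_num : (0:ℝ) ≤ 2)] at hgm
  rw [← Real.rpow_add (by norm_num : (0:ℝ) < 2)] at hgm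
  have hexp : (n:ℝ)/(k:ℝ) * ((k:ℝ)/((k:ℝ)+1)) + (1:ℝ)/((k:ℝ)+1)
      = ((n:ℝ)+1)/((k:ℝ)+1) := by
    field_simp
  rw [hexp] at hgm
  have := mul_le_mul_of_nonneg_left hgm hk1.le
  calc ((k:ℝ)+1) * (2:ℝ) ^ (((n:ℝ)+1)/((k:ℝ)+1))
      ≤ ((k:ℝ)+1) * ((k:ℝ)/((k:ℝ)+1) * (2:ℝ) ^ ((n:ℝ)/(k:ℝ)) + 1/((k:ℝ)+1) * 2) := this
    _ = (k:ℝ) * (2:ℝ) ^ ((n:ℝ)/(k:ℝ)) + 2 := by field_simp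

lemma lemB : ∀ n k : ℕ, 1 ≤ k → k ≤ n →
    (k:ℝ) * (2:ℝ) ^ ((n:ℝ)/(k:ℝ)) * (stirling n k : ℝ) ≤ (gaux n k : ℝ) := by
  intro n
  induction n with
  | zero => intro k h1 h2; omega
  | succ n ih =>
    intro k h1 h2
    match k, h1 with
    | j+1, _ =>
      by_cases hd : j = n
      · -- diagonal case
        subst hd
        have hg : gaux (j+1) (j+1) = (j+1) * 2 := by
          rw [gaux_identity, stirling_diag, stirling_diag]
        rw [hg]
        rw [stirling_diag]
        have hne : ((j:ℝ)+1) ≠ 0 := by positivity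
        have : (((j:ℕ)+1 : ℕ) : ℝ) / (((j:ℕ)+1 : ℕ) : ℝ) = 1 := by
          push_cast; field_simp
        push_cast
        rw [div_self hne, Real.rpow_one]
        norm_num
      · -- j + 1 ≤ n
        have hjn : j + 1 ≤ n := by omega
        have e1 : gaux (n+1) (j+1) = gaux n j + 2 * stirling n j + (j + 2) * gaux n (j + 1) := rfl
        have e2 : stirling (n+1) (j+1) = stirling n j + (j+1) * stirling n (j+1) := rfl
        have ih2 := ih (j+1) (by omega) hjn
        have hb := key_b j
        have hS1 : (0:ℝ) ≤ (stirling n (j+1) : ℝ) := by positivity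
        have hS0 : (0:ℝ) ≤ (stirling n j : ℝ) := by positivity
        have hp : (0:ℝ) < (2:ℝ) ^ ((n:ℝ)/((j:ℝ)+1)) := Real.rpow_pos_of_pos (by norm_num) _
        -- coefficient inequality for the stirling n (j+1) part
        have hc2 : ((j:ℝ)+1) * (2:ℝ) ^ (((n:ℝ)+1)/((j:ℝ)+1)) * ((j:ℝ)+1)
            ≤ ((j:ℝ)+2) * (((j:ℝ)+1) * (2:ℝ) ^ ((n:ℝ)/((j:ℝ)+1))) := by
          have hsplit : (2:ℝ) ^ (((n:ℝ)+1)/((j:ℝ)+1))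
              = (2:ℝ) ^ ((n:ℝ)/((j:ℝ)+1)) * (2:ℝ) ^ ((1:ℝ)/((j:ℝ)+1)) := by
            rw [← Real.rpow_add (by norm_num : (0:ℝ) < 2)]
            congr 1
            field_simp
          rw [hsplit]
          have := mul_le_mul_of_nonneg_left hb hp.le
          nlinarith [hp, this]
        -- term with gaux n (j+1)
        have ht2 : ((j:ℝ)+1) * (2:ℝ) ^ (((n:ℝ)+1)/((j:ℝ)+1)) * (((j:ℝ)+1) * (stirling n (j+1) : ℝ))
            ≤ ((j:ℝ)+2) * (gaux n (j+1) : ℝ) := by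
          calc ((j:ℝ)+1) * (2:ℝ) ^ (((n:ℝ)+1)/((j:ℝ)+1)) * (((j:ℝ)+1) * (stirling n (j+1) : ℝ))
              ≤ ((j:ℝ)+2) * (((j:ℝ)+1) * (2:ℝ) ^ ((n:ℝ)/((j:ℝ)+1))) * (stirling n (j+1) : ℝ) := by
                nlinarith [hc2, hS1]
            _ = ((j:ℝ)+2) * (((j:ℝ)+1) * (2:ℝ) ^ ((n:ℝ)/((j:ℝ)+1)) * (stirling n (j+1) : ℝ)) := by
                ring
            _ ≤ ((j:ℝ)+2) * (gaux n (j+1) : ℝ) := by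
                have : (0:ℝ) ≤ (j:ℝ)+2 := by positivity
                have h' : ((j:ℝ)+1) * (2:ℝ) ^ ((n:ℝ)/((j:ℝ)+1)) * (stirling n (j+1) : ℝ)
                    ≤ (gaux n (j+1) : ℝ) := by
                  have := ih2
                  push_cast at this ⊢
                  convert this using 3
                nlinarith [h', this]
        -- term with stirling n j
        have ht1 : ((j:ℝ)+1) * (2:ℝ) ^ (((n:ℝ)+1)/((j:ℝ)+1)) * (stirling n j : ℝ)
            ≤ (gaux n j : ℝ) + 2 * (stirling n j : ℝ) := by
          by_cases hj0 : j = 0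
          · subst hj0
            -- stirling n 0 = 0 since n ≥ 1
            have hn1 : 1 ≤ n := by omega
            have : stirling n 0 = 0 := by
              match n, hn1 with
              | m+1, _ => rfl
            rw [this]
            have : gaux n 0 = 0 := by
              match n, hn1 with
              | m+1, _ => rfl
            rw [this]
            norm_num
          · have hj1 : 1 ≤ j := by omega
            have ih1 := ih j hj1 (by omega)
            have ha := key_a n j hj1
            calc ((j:ℝ)+1) * (2:ℝ) ^ (((n:ℝ)+1)/((j:ℝ)+1)) * (stirling n j : ℝ)
                ≤ ((j:ℝ) * (2:ℝ) ^ ((n:ℝ)/(j:ℝ)) + 2) * (stirling n j : ℝ) := by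
                  nlinarith [ha, hS0]
              _ = (j:ℝ) * (2:ℝ) ^ ((n:ℝ)/(j:ℝ)) * (stirling n j : ℝ) + 2 * (stirling n j : ℝ) := by
                  ring
              _ ≤ (gaux n j : ℝ) + 2 * (stirling n j : ℝ) := by linarith [ih1]
        -- combine
        rw [e1, e2]
        push_cast
        push_cast at ht1 ht2
        nlinarith [ht1, ht2]

theorem stmt_1 (n k : ℕ) (hk : 2 ≤ k) (hkn : k ≤ n) :
    (stirling n k : ℝ) ≥
      ((2 : ℝ) ^ (((n : ℝ) - 1) / ((k : ℝ) - 1)) - 1) * stirling (n - 1) (k - 1) := by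
  obtain ⟨j, rfl⟩ : ∃ j, k = j + 1 := ⟨k - 1, by omega⟩
  obtain ⟨m, rfl⟩ : ∃ m, n = m + 1 := ⟨n - 1, by omega⟩
  have hj1 : 1 ≤ j := by omega
  have hjm : j ≤ m := by omega
  have hid := gaux_identity m j
  have hB := lemB m j hj1 hjm
  have hjpos : (0:ℝ) < (j:ℝ) := by exact_mod_cast hj1
  have hid' : (gaux m j : ℝ) = (j:ℝ) * ((stirling (m+1) (j+1) : ℝ) + (stirling m j : ℝ)) := by
    rw [hid]; push_cast; ring
  rw [hid'] at hB
  have hkey : (2:ℝ) ^ ((m:ℝ)/(j:ℝ)) * (stirling m j : ℝ)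
      ≤ (stirling (m+1) (j+1) : ℝ) + (stirling m j : ℝ) := by
    nlinarith [hB, hjpos]
  have hsub1 : (m + 1 : ℕ) - 1 = m := by omega
  have hsub2 : (j + 1 : ℕ) - 1 = j := by omega
  rw [hsub1, hsub2]
  have hc1 : ((m:ℝ)+1) - 1 = (m:ℝ) := by ring
  have hc2 : ((j:ℝ)+1) - 1 = (j:ℝ) := by ring
  push_cast
  rw [hc1, hc2]
  nlinarith [hkey]
end

section
/- For integers m ≥ ℓ ≥ 2, the Stirling number of the second kind satisfies S(m-1,ℓ) ≥ (1/ℓ)·(2^((m-1)/(ℓ-1)) - 2) · S(m-1,ℓ-1), where the exponent is the real number (m-1)/(ℓ-1). -/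
lemma stirling_one' (n : ℕ) : stirling (n+1) 1 = 1 := by
  induction n with
  | zero => rfl
  | succ n ih =>
    show stirling (n+1) 0 + 1 * stirling (n+1) 1 = 1
    rw [ih]
    rfl

lemma stirling_two' (n : ℕ) : stirling (n+1) 2 = 2^n - 1 := by
  induction n with
  | zero => rfl
  | succ n ih =>
    show stirling (n+1) 1 + 2 * stirling (n+1) 2 = 2^(n+1) - 1
    rw [stirling_one', ih]
    have : 1 ≤ 2^n := Nat.one_le_two_pow
    omega

lemma aux_pow (a : ℝ) (ha : 1 ≤ a) : ∀ K : ℕ, ((K:ℝ)+1) * a^K ≤ (K:ℝ) * a^(K+1) + 1 := by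
  intro K
  induction K with
  | zero => simp
  | succ K ih =>
    have ha0 : (0:ℝ) ≤ a := by linarith
    have h5 : a * (((K:ℝ)+1) * a^K) ≤ a * ((K:ℝ) * a^(K+1) + 1) :=
      mul_le_mul_of_nonneg_left ih ha0
    have hb : (1:ℝ) ≤ a^(K+1) := one_le_pow₀ ha
    have h6 : (0:ℝ) ≤ (a-1) * (a^(K+1)-1) := mul_nonneg (by linarith) (by linarith)
    have e1 : a^(K+1) = a^K * a := pow_succ a K
    have e2 : a^(K+1+1) = a^K * a * a := by rw [pow_succ, pow_succ]
    rw [e1] at h5 hb h6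
    rw [e1, e2]
    push_cast
    nlinarith [h5, h6]

lemma F1 (k : ℕ) (hk : 2 ≤ k) :
    (k:ℝ) * ((2:ℝ)^((1:ℝ)/(k:ℝ)) - 1) ≤ ((k:ℝ)-1) * ((2:ℝ)^((1:ℝ)/((k:ℝ)-1)) - 1) := by
  obtain ⟨m, rfl⟩ : ∃ m, k = m + 2 := ⟨k - 2, by omega⟩
  set M : ℝ := (m : ℝ) with hM
  have hM0 : (0:ℝ) ≤ M := Nat.cast_nonneg m
  have h1 : ((M+1)*(M+2)) ≠ 0 := by positivity
  set a : ℝ := (2:ℝ) ^ ((1:ℝ)/((M+1)*(M+2))) with haDef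
  have ha1 : (1:ℝ) ≤ a := by
    rw [haDef, show (1:ℝ) = (2:ℝ)^(0:ℝ) by rw [Real.rpow_zero]]
    exact Real.rpow_le_rpow_of_exponent_le (by norm_num) (by positivity)
  have e1 : a ^ (m+1) = (2:ℝ)^((1:ℝ)/(M+2)) := by
    rw [haDef, ← Real.rpow_natCast ((2:ℝ)^((1:ℝ)/((M+1)*(M+2)))) (m+1),
      ← Real.rpow_mul (by norm_num)]
    congr 1
    push_cast
    field_simp
    rw [hM]
  have e2 : a ^ (m+2) = (2:ℝ)^((1:ℝ)/(M+1)) := by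
    rw [haDef, ← Real.rpow_natCast ((2:ℝ)^((1:ℝ)/((M+1)*(M+2)))) (m+2),
      ← Real.rpow_mul (by norm_num)]
    congr 1
    push_cast
    field_simp
    ring
  have q := aux_pow a ha1 (m+1)
  rw [show (m+1)+1 = m+2 from rfl] at q
  rw [e1, e2] at q
  push_cast at q ⊢
  have hc1 : ((m:ℝ)+2) - 1 = M + 1 := by rw [hM]; ring
  rw [hc1]
  nlinarith [q]

lemma R1 (k : ℕ) (hk : 1 ≤ k) : (k:ℝ) * (2:ℝ)^((1:ℝ)/(k:ℝ)) ≤ (k:ℝ) + 1 := by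
  have hk0 : (0:ℝ) < (k:ℝ) := by exact_mod_cast hk
  have hkne : (k:ℝ) ≠ 0 := ne_of_gt hk0
  have hB : (2:ℝ) ≤ (1 + 1/(k:ℝ))^(k:ℕ) := by
    have hnn : (0:ℝ) ≤ 1/(k:ℝ) := by positivity
    have := one_add_mul_le_pow (a := 1/(k:ℝ)) (by linarith) k
    have hkk : (k:ℝ) * (1/(k:ℝ)) = 1 := by field_simp
    nlinarith [this]
  have h2 : (2:ℝ)^((1:ℝ)/(k:ℝ)) ≤ ((1 + 1/(k:ℝ))^(k:ℕ))^((1:ℝ)/(k:ℝ)) :=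
    Real.rpow_le_rpow (by norm_num) hB (by positivity)
  have h3 : ((1 + 1/(k:ℝ))^(k:ℕ))^((1:ℝ)/(k:ℝ)) = 1 + 1/(k:ℝ) := by
    rw [← Real.rpow_natCast (1 + 1/(k:ℝ)) k, ← Real.rpow_mul (by positivity)]
    rw [show (k:ℝ) * ((1:ℝ)/(k:ℝ)) = 1 by field_simp, Real.rpow_one]
  rw [h3] at h2
  have := mul_le_mul_of_nonneg_left h2 (le_of_lt hk0)
  have hee : (k:ℝ) * (1 + 1/(k:ℝ)) = (k:ℝ) + 1 := by field_simp
  linarith [this]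

lemma R2 (k : ℕ) (hk : 2 ≤ k) (n : ℕ) (hn : k ≤ n) :
    (k:ℝ) * ((2:ℝ)^(((n:ℝ)+1)/(k:ℝ)) - 2) ≤ ((k:ℝ)-1) * ((2:ℝ)^((n:ℝ)/((k:ℝ)-1)) - 2) := by
  have hk0 : (0:ℝ) < (k:ℝ) := by positivity
  have hk2 : (2:ℝ) ≤ (k:ℝ) := by exact_mod_cast hk
  have hk1 : (0:ℝ) < (k:ℝ) - 1 := by linarith
  induction n, hn using Nat.le_induction with
  | base =>
    have d1 : ((k:ℝ)+1)/(k:ℝ) = 1 + 1/(k:ℝ) := by field_simp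
    have d2 : (k:ℝ)/((k:ℝ)-1) = 1 + 1/((k:ℝ)-1) := by field_simp; ring
    rw [d1, d2, Real.rpow_add (by norm_num), Real.rpow_add (by norm_num), Real.rpow_one]
    have := F1 k hk
    nlinarith [this]
  | succ n hn ih =>
    have hN : (k:ℝ) ≤ (n:ℝ) := by exact_mod_cast hn
    push_cast
    have d1 : ((n:ℝ)+1+1)/(k:ℝ) = ((n:ℝ)+1)/(k:ℝ) + 1/(k:ℝ) := by ring
    have d2 : ((n:ℝ)+1)/((k:ℝ)-1) = (n:ℝ)/((k:ℝ)-1) + 1/((k:ℝ)-1) := by ring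
    rw [d1, d2, Real.rpow_add (by norm_num), Real.rpow_add (by norm_num)]
    have d3 : (2:ℝ)^(((n:ℝ)+1)/(k:ℝ)) ≤ (2:ℝ)^((n:ℝ)/((k:ℝ)-1)) := by
      apply Real.rpow_le_rpow_of_exponent_le (by norm_num)
      rw [div_le_div_iff₀ hk0 hk1]
      nlinarith [hN]
    have d4 := F1 k hk
    have hg1 : (1:ℝ) ≤ (2:ℝ)^((1:ℝ)/(k:ℝ)) := by
      nth_rewrite 1 [show (1:ℝ) = (2:ℝ)^(0:ℝ) by rw [Real.rpow_zero]]
      exact Real.rpow_le_rpow_of_exponent_le (by norm_num) (by positivity)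
    have hx0 : (0:ℝ) ≤ (2:ℝ)^(((n:ℝ)+1)/(k:ℝ)) := by positivity
    have e : ((k:ℝ) * ((2:ℝ)^((1:ℝ)/(k:ℝ)) - 1)) * ((2:ℝ)^(((n:ℝ)+1)/(k:ℝ)))
        ≤ (((k:ℝ)-1) * ((2:ℝ)^((1:ℝ)/((k:ℝ)-1)) - 1)) * ((2:ℝ)^((n:ℝ)/((k:ℝ)-1))) := by
      apply mul_le_mul d4 d3 hx0
      nlinarith [hg1, d4]
    nlinarith [ih, e]

lemma key_step (K A B C t u T : ℝ) (hK : 2 ≤ K) (hB : 0 ≤ B) (hC : 0 ≤ C)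
    (IH1 : (t-2)*B ≤ (K+1)*A) (IH2 : (u-2)*C ≤ K*B)
    (hR2 : K*(T-2) ≤ (K-1)*(u-2))
    (hR1e : K*(T-2) ≤ (K+1)*(t-2)+2) :
    (T-2)*(C + K*B) ≤ (K+1)*(B + (K+1)*A) := by
  have hK0 : (0:ℝ) < K := by linarith
  have e1 : (K*(T-2))*C ≤ (K-1)*(K*B) := by
    calc (K*(T-2))*C ≤ ((K-1)*(u-2))*C := mul_le_mul_of_nonneg_right hR2 hC
      _ = (K-1)*((u-2)*C) := by ring
      _ ≤ (K-1)*(K*B) := mul_le_mul_of_nonneg_left IH2 (by linarith)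
  have e3 : (K*(T-2))*(K*B) ≤ ((K+1)*(t-2)+2)*(K*B) :=
    mul_le_mul_of_nonneg_right hR1e (by positivity)
  have e4 : ((t-2)*B)*(K*(K+1)) ≤ ((K+1)*A)*(K*(K+1)) :=
    mul_le_mul_of_nonneg_right IH1 (by nlinarith)
  have hs : K*((T-2)*(C+K*B)) ≤ K*((K+1)*(B+(K+1)*A)) := by nlinarith [e1, e3, e4]
  exact le_of_mul_le_mul_left hs hK0

lemma key : ∀ n k : ℕ, 1 ≤ k → k ≤ n →
    ((2:ℝ)^((n:ℝ)/(k:ℝ)) - 2) * (stirling n k : ℝ) ≤ ((k:ℝ)+1) * (stirling n (k+1) : ℝ) := by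
  intro n
  induction n with
  | zero => intro k hk hn; omega
  | succ n ih =>
    intro k hk hn
    match k, hk with
    | 1, _ =>
      rw [stirling_one', stirling_two']
      have h3 : ((2^n - 1 : ℕ) : ℝ) = 2^n - 1 := by
        have : 1 ≤ 2^n := Nat.one_le_two_pow
        push_cast [this]
        ring
      push_cast
      rw [show ((n:ℝ)+1)/(1:ℝ) = (((n+1:ℕ)):ℝ) by push_cast; ring,
        Real.rpow_natCast 2 (n+1), h3]
      rw [pow_succ]
      ring_nf
      nlinarith []
    | (j+2), _ =>
      by_cases hkn : j + 2 ≤ n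
      · -- main inductive step
        have IH1 := ih (j+2) (by omega) hkn
        have IH2 := ih (j+1) (by omega) (by omega)
        have hR2 := R2 (j+2) (by omega) n hkn
        have hR1 := R1 (j+2) (by omega)
        push_cast at IH1 IH2 hR2 hR1
        rw [show ((j:ℝ)+2) - 1 = (j:ℝ)+1 by ring] at hR2
        have hA : (0:ℝ) ≤ (stirling n (j+3) : ℝ) := Nat.cast_nonneg _
        have hB : (0:ℝ) ≤ (stirling n (j+2) : ℝ) := Nat.cast_nonneg _
        have hC : (0:ℝ) ≤ (stirling n (j+1) : ℝ) := Nat.cast_nonneg _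
        have ht0 : (0:ℝ) ≤ (2:ℝ)^((n:ℝ)/((j:ℝ)+2)) := by positivity
        have u1 : (stirling (n+1) (j+2) : ℝ)
            = (stirling n (j+1) : ℝ) + ((j:ℝ)+2) * (stirling n (j+2) : ℝ) := by
          show ((stirling n (j+1) + (j+1+1) * stirling n (j+1+1) : ℕ) : ℝ) = _
          push_cast
          ring
        have u2 : (stirling (n+1) (j+2+1) : ℝ)
            = (stirling n (j+2) : ℝ) + ((j:ℝ)+3) * (stirling n (j+3) : ℝ) := by
          show ((stirling n (j+2) + (j+2+1) * stirling n (j+2+1) : ℕ) : ℝ) = _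
          push_cast
          ring
        have hTsplit : (2:ℝ)^(((n:ℝ)+1)/((j:ℝ)+2))
            = (2:ℝ)^((n:ℝ)/((j:ℝ)+2)) * (2:ℝ)^((1:ℝ)/((j:ℝ)+2)) := by
          rw [show ((n:ℝ)+1)/((j:ℝ)+2) = (n:ℝ)/((j:ℝ)+2) + 1/((j:ℝ)+2) by ring,
            Real.rpow_add (by norm_num)]
        have hR2' : ((j:ℝ)+2) * ((2:ℝ)^(((n:ℝ)+1)/((j:ℝ)+2)) - 2)
            ≤ (((j:ℝ)+2)-1) * ((2:ℝ)^((n:ℝ)/((j:ℝ)+1)) - 2) := by linarith [hR2]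
        have hR1e : ((j:ℝ)+2) * ((2:ℝ)^(((n:ℝ)+1)/((j:ℝ)+2)) - 2)
            ≤ (((j:ℝ)+2)+1) * ((2:ℝ)^((n:ℝ)/((j:ℝ)+2)) - 2) + 2 := by
          rw [hTsplit]
          nlinarith [mul_le_mul_of_nonneg_right hR1 ht0]
        have IH1' : ((2:ℝ)^((n:ℝ)/((j:ℝ)+2)) - 2) * (stirling n (j+2) : ℝ)
            ≤ (((j:ℝ)+2)+1) * (stirling n (j+3) : ℝ) := by
          rw [show j+2+1 = j+3 from rfl] at IH1
          linarith [IH1]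
        have IH2' : ((2:ℝ)^((n:ℝ)/((j:ℝ)+1)) - 2) * (stirling n (j+1) : ℝ)
            ≤ ((j:ℝ)+2) * (stirling n (j+2) : ℝ) := by
          rw [show j+1+1 = j+2 from rfl] at IH2
          linarith [IH2]
        have H := key_step ((j:ℝ)+2) (stirling n (j+3) : ℝ) (stirling n (j+2) : ℝ)
          (stirling n (j+1) : ℝ) ((2:ℝ)^((n:ℝ)/((j:ℝ)+2))) ((2:ℝ)^((n:ℝ)/((j:ℝ)+1)))
          ((2:ℝ)^(((n:ℝ)+1)/((j:ℝ)+2))) (by linarith [Nat.cast_nonneg (α := ℝ) j]) hB hC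
          IH1' IH2' hR2' hR1e
        rw [u1, u2]
        push_cast
        nlinarith [H]
      · -- degenerate: n+1 = j+2, coefficient is 0
        have hnk : n+1 = j+2 := by omega
        have hx : (((n+1:ℕ)):ℝ)/(((j+2:ℕ)):ℝ) = 1 := by
          rw [hnk]; push_cast; field_simp
        push_cast at hx ⊢
        rw [hx, Real.rpow_one]
        have : (0:ℝ) ≤ ((j:ℝ)+2+1) * (stirling (n+1) (j+2+1) : ℝ) := by positivity
        nlinarith [this]

theorem stmt_2 (m ℓ : ℕ) (hℓ : 2 ≤ ℓ) (hmℓ : ℓ ≤ m) :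
    (stirling (m - 1) ℓ : ℝ) ≥
      (1 / (ℓ : ℝ)) * ((2 : ℝ) ^ (((m : ℝ) - 1) / ((ℓ : ℝ) - 1)) - 2) *
        stirling (m - 1) (ℓ - 1) := by
  have h := key (m-1) (ℓ-1) (by omega) (by omega)
  rw [show ℓ - 1 + 1 = ℓ by omega] at h
  have c1 : ((ℓ-1 : ℕ) : ℝ) = (ℓ:ℝ) - 1 := by
    have : 1 ≤ ℓ := by omega
    push_cast [this]
    ring
  have c2 : ((m-1 : ℕ) : ℝ) = (m:ℝ) - 1 := by
    have : 1 ≤ m := by omega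
    push_cast [this]
    ring
  rw [c1, c2] at h
  have hl0 : (0:ℝ) < (ℓ:ℝ) := by positivity
  rw [ge_iff_le]
  rw [show (1/(ℓ:ℝ)) * ((2:ℝ)^(((m:ℝ)-1)/((ℓ:ℝ)-1)) - 2) * (stirling (m-1) (ℓ-1) : ℝ)
      = (((2:ℝ)^(((m:ℝ)-1)/((ℓ:ℝ)-1)) - 2) * (stirling (m-1) (ℓ-1) : ℝ)) / (ℓ:ℝ) by ring]
  rw [div_le_iff₀ hl0]
  have hl1 : (ℓ:ℝ) - 1 + 1 = (ℓ:ℝ) := by ring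
  nlinarith [h]
end

section
/- For integers 1 ≤ r < n, the Stirling number of the second kind satisfies S(n,r) ≥ (1/2)(r² + r + 2)·r^(n-r-1) - 1. -/
lemma stirling_zero_of_lt : ∀ (n k : ℕ), n < k → stirling n k = 0
  | 0, _ + 1, _ => rfl
  | n + 1, k + 1, h => by
    have h1 := stirling_zero_of_lt n k (by omega)
    have h2 := stirling_zero_of_lt n (k + 1) (by omega)
    simp [stirling, h1, h2]

lemma stirling_self (n : ℕ) : stirling n n = 1 := by
  induction n with
  | zero => rfl
  | succ k ih =>
    have := stirling_zero_of_lt k (k + 1) (by omega)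
    simp [stirling, ih, this]

lemma stirling_succ_self (k : ℕ) : 2 * stirling (k + 1) k = k * (k + 1) := by
  induction k with
  | zero => rfl
  | succ m ih =>
    have : stirling (m + 2) (m + 1) = stirling (m + 1) m + (m + 1) * stirling (m + 1) (m + 1) := rfl
    rw [this, stirling_self]
    nlinarith [ih]

lemma stirling_mono_n (k : ℕ) : Monotone (fun n => stirling n (k + 1)) := by
  apply monotone_nat_of_le_succ
  intro n
  show stirling n (k + 1) ≤ stirling n k + (k + 1) * stirling n (k + 1)
  nlinarith [Nat.zero_le (stirling n k), Nat.zero_le (stirling n (k + 1))]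

lemma stirling_prev_ge (n r : ℕ) (hr : 1 ≤ r) (hn : r ≤ n) :
    stirling n (r - 1) + 1 ≥ r := by
  match r, hr with
  | 1, _ => omega
  | s + 2, _ =>
    have h1 : stirling (s + 2) (s + 1) ≤ stirling n (s + 1) :=
      stirling_mono_n s (by omega)
    have h2 := stirling_succ_self (s + 1)
    show stirling n (s + 1) + 1 ≥ s + 2
    nlinarith

lemma key_s3 (n r : ℕ) (hr : 1 ≤ r) (hrn : r < n) :
    2 * stirling n r + 2 ≥ (r ^ 2 + r + 2) * r ^ (n - r - 1) := by
  induction n, hrn using Nat.le_induction with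
  | base =>
    have h := stirling_succ_self r
    have : r + 1 - r - 1 = 0 := by omega
    rw [this, pow_zero]
    nlinarith
  | succ n hn ih =>
    have hrec : stirling (n + 1) r = stirling n (r - 1) + r * stirling n r := by
      match r, hr with
      | s + 1, _ => rfl
    have hexp : n + 1 - r - 1 = (n - r - 1) + 1 := by omega
    rw [hrec, hexp, pow_succ]
    have hprev := stirling_prev_ge n r hr (by omega)
    calc (r ^ 2 + r + 2) * (r ^ (n - r - 1) * r)
        = ((r ^ 2 + r + 2) * r ^ (n - r - 1)) * r := by ring
      _ ≤ (2 * stirling n r + 2) * r := Nat.mul_le_mul_right r ih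
      _ ≤ 2 * (stirling n (r - 1) + r * stirling n r) + 2 := by nlinarith

theorem stmt_3 (n r : ℕ) (hr : 1 ≤ r) (hrn : r < n) :
    (stirling n r : ℝ) ≥
      (1 / 2) * ((r : ℝ) ^ 2 + r + 2) * (r : ℝ) ^ (n - r - 1) - 1 := by
  have h := key_s3 n r hr hrn
  have h' : ((r ^ 2 + r + 2) * r ^ (n - r - 1) : ℝ) ≤ (2 * stirling n r + 2 : ℕ) := by
    exact_mod_cast Nat.cast_le.mpr h
  push_cast at h'
  linarith
end

section
/- Let k ≥ t+3 ≥ 4 and n ≥ 2L(k,t), where L(k,t) = (t+1) + (k-t+1)·log₂((t+1)(k-t+1)). Then for every integer s with 0 ≤ s ≤ k-t-2, the Stirling numbers satisfy S(n-t-s, k-t-s) > (t+1)²(k-t+1)²·S(n-t-s-1, k-t-s-1). -/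
/-- The threshold function `L(k,t) = (t+1) + (k-t+1)·log₂((t+1)(k-t+1))`. -/
noncomputable def Lkt (k t : ℕ) : ℝ :=
  ((t : ℝ) + 1) + ((k : ℝ) - t + 1) * Real.logb 2 (((t : ℝ) + 1) * ((k : ℝ) - t + 1))

lemma pascal_sum (g : ℕ → ℕ) (k : ℕ) :
    ∑ j ∈ Finset.range (k+1), k.choose j * (g j + g (j+1))
      = ∑ i ∈ Finset.range (k+2), (k+1).choose i * g i := by
  have h1 : ∑ i ∈ Finset.range (k+2), (k+1).choose i * g i
      = (∑ j ∈ Finset.range (k+1), (k+1).choose (j+1) * g (j+1)) + g 0 := by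
    rw [Finset.sum_range_succ' (fun i => (k+1).choose i * g i) (k+1)]
    simp
  have h2 : ∑ j ∈ Finset.range (k+1), (k+1).choose (j+1) * g (j+1)
      = (∑ j ∈ Finset.range (k+1), k.choose j * g (j+1))
        + ∑ j ∈ Finset.range (k+1), k.choose (j+1) * g (j+1) := by
    rw [← Finset.sum_add_distrib]
    refine Finset.sum_congr rfl fun j _ => ?_
    rw [Nat.choose_succ_succ, Nat.add_mul]
  have h3 : (∑ j ∈ Finset.range (k+1), k.choose (j+1) * g (j+1)) + g 0
      = ∑ i ∈ Finset.range (k+1), k.choose i * g i := by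
    have := Finset.sum_range_succ' (fun i => k.choose i * g i) (k+1)
    rw [Finset.sum_range_succ (fun i => k.choose i * g i) (k+1)] at this
    simpa using this.symm
  have h4 : ∑ j ∈ Finset.range (k+1), k.choose j * (g j + g (j+1))
      = (∑ j ∈ Finset.range (k+1), k.choose j * g j)
        + ∑ j ∈ Finset.range (k+1), k.choose j * g (j+1) := by
    rw [← Finset.sum_add_distrib]
    exact Finset.sum_congr rfl fun j _ => by rw [Nat.mul_add]
  omega

lemma surj_identity (n : ℕ) : ∀ k : ℕ,
    ∑ j ∈ Finset.range (k+1), k.choose j * (j.factorial * stirling n j) = k ^ n := by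
  induction n with
  | zero =>
    intro k
    rw [Finset.sum_range_succ' (fun j => k.choose j * (j.factorial * stirling 0 j)) k]
    simp [stirling]
  | succ n ih =>
    intro k
    match k with
    | 0 => simp [stirling]
    | K + 1 =>
      rw [Finset.sum_range_succ'
        (fun j => (K+1).choose j * (j.factorial * stirling (n+1) j)) (K+1)]
      have hst0 : stirling (n+1) 0 = 0 := rfl
      have hterm : ∀ j, (K+1).choose (j+1) * ((j+1).factorial * stirling (n+1) (j+1))
          = (K+1) * (K.choose j * ((j.factorial * stirling n j)
              + (j+1).factorial * stirling n (j+1))) := by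
        intro j
        have hrec : stirling (n+1) (j+1) = stirling n j + (j+1) * stirling n (j+1) := rfl
        have hch : (K+1).choose (j+1) * (j+1) = (K+1) * K.choose j :=
          (Nat.add_one_mul_choose_eq K j).symm
        calc (K+1).choose (j+1) * ((j+1).factorial * stirling (n+1) (j+1))
            = ((K+1).choose (j+1) * (j+1)) * (j.factorial * stirling n j
                + j.factorial * ((j+1) * stirling n (j+1))) := by
              rw [hrec, Nat.factorial_succ]; ring
          _ = ((K+1) * K.choose j) * (j.factorial * stirling n j
                + j.factorial * ((j+1) * stirling n (j+1))) := by rw [hch]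
          _ = (K+1) * (K.choose j * ((j.factorial * stirling n j)
                + (j+1).factorial * stirling n (j+1))) := by
              rw [Nat.factorial_succ]; ring
      calc (∑ j ∈ Finset.range (K+1),
              (K+1).choose (j+1) * ((j+1).factorial * stirling (n+1) (j+1)))
            + (K+1).choose 0 * (Nat.factorial 0 * stirling (n+1) 0)
          = ∑ j ∈ Finset.range (K+1), (K+1) * (K.choose j * ((j.factorial * stirling n j)
              + (j+1).factorial * stirling n (j+1))) := by
            rw [hst0]; simp only [Nat.mul_zero, Nat.zero_mul, Nat.add_zero, Nat.mul_zero]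
            exact Finset.sum_congr rfl fun j _ => hterm j
        _ = (K+1) * ∑ j ∈ Finset.range (K+1), K.choose j * ((j.factorial * stirling n j)
              + (j+1).factorial * stirling n (j+1)) := by rw [Finset.mul_sum]
        _ = (K+1) * ∑ i ∈ Finset.range (K+2),
              (K+1).choose i * (i.factorial * stirling n i) := by
            rw [pascal_sum (fun i => i.factorial * stirling n i) K]
        _ = (K+1) * (K+1) ^ n := by rw [ih (K+1)]
        _ = (K+1) ^ (n+1) := by ring

lemma stirling_upper (n k : ℕ) : k.factorial * stirling n k ≤ k ^ n := by
  have h := surj_identity n k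
  rw [Finset.sum_range_succ] at h
  simp at h
  omega

lemma stirling_lower (n K : ℕ) :
    (K+1) ^ n ≤ (K+1).factorial * stirling n (K+1) + (K+1) * K ^ n := by
  have h := surj_identity n (K+1)
  rw [Finset.sum_range_succ] at h
  simp only [Nat.choose_self, Nat.one_mul] at h
  have hb : ∑ j ∈ Finset.range (K+1), (K+1).choose j * (j.factorial * stirling n j)
      ≤ (K+1) * K ^ n := by
    calc ∑ j ∈ Finset.range (K+1), (K+1).choose j * (j.factorial * stirling n j)
        ≤ ∑ j ∈ Finset.range (K+1), (K+1) * (K.choose j * (j.factorial * stirling n j)) := by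
          refine Finset.sum_le_sum fun j hj => ?_
          have hjK : j ≤ K := Nat.lt_succ_iff.mp (Finset.mem_range.mp hj)
          have hid := Nat.choose_mul_succ_eq K j
          have h1 : 1 ≤ K + 1 - j := by omega
          have hle : (K+1).choose j ≤ (K+1).choose j * (K + 1 - j) :=
            Nat.le_mul_of_pos_right _ h1
          rw [← hid] at hle
          calc (K+1).choose j * (j.factorial * stirling n j)
              ≤ (K.choose j * (K+1)) * (j.factorial * stirling n j) :=
                Nat.mul_le_mul_right _ hle
            _ = (K+1) * (K.choose j * (j.factorial * stirling n j)) := by ring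
      _ = (K+1) * ∑ j ∈ Finset.range (K+1), K.choose j * (j.factorial * stirling n j) := by
          rw [Finset.mul_sum]
      _ = (K+1) * K ^ n := by rw [surj_identity n K]
  omega

lemma aux_key (a b ℓ G : ℝ) (ha2 : 2 ≤ a) (hb4 : 4 ≤ b)
    (hl_lo : (0.6931471803 : ℝ) < ℓ) (hl_hi : ℓ < (0.6931471808 : ℝ))
    (hG3 : 3 * ℓ ≤ G) :
    (ℓ + 2*G) * (b - 1) < a + 2 * b * G / ℓ := by
  have hlpos : (0:ℝ) < ℓ := by linarith
  rw [← sub_pos]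
  have expand : a + 2 * b * G / ℓ - (ℓ + 2*G) * (b - 1)
      = (a * ℓ + 2*b*G - (b-1)*ℓ^2 - 2*(b-1)*ℓ*G) / ℓ := by
    field_simp; ring
  rw [expand]
  apply div_pos _ hlpos
  have hb1' : (0:ℝ) < b - 1 := by linarith
  have h2pos : (0:ℝ) < b - (b-1)*ℓ := by nlinarith [mul_lt_mul_of_pos_left hl_hi hb1']
  have f1 : 3*ℓ*(b-(b-1)*ℓ) ≤ G*(b-(b-1)*ℓ) := mul_le_mul_of_nonneg_right hG3 h2pos.le
  have f2 : (b-1)*ℓ ≤ (b-1)*0.6931471808 := by nlinarith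
  have f3 : ℓ*((b-1)*ℓ) ≤ ℓ*((b-1)*0.6931471808) := mul_le_mul_of_nonneg_left f2 hlpos.le
  have f4 : ℓ*((b-1)*0.6931471808) ≤ 0.6931471808*((b-1)*0.6931471808) :=
    mul_le_mul_of_nonneg_right hl_hi.le (by nlinarith)
  have f5 : 0.6931471803*b ≤ ℓ*b := mul_le_mul_of_nonneg_right hl_lo.le (by linarith)
  have f6 : 2*ℓ ≤ a*ℓ := mul_le_mul_of_nonneg_right ha2 hlpos.le
  nlinarith [f1, f3, f4, f5, f6]

lemma aux_KRI (a b : ℝ) (p d M : ℕ) (ha2 : 2 ≤ a) (hb4 : 4 ≤ b)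
    (hpb : (p:ℝ) ≤ b - 2) (hp1 : 1 ≤ p) (hd1 : 1 ≤ d) (hM : M = d + p)
    (hdb : (d:ℝ) + b - 2 ≥ a + 2 * b * Real.log (a*b) / Real.log 2) :
    (a^2*b^2 + (p:ℝ)) * (p:ℝ) ^ M < ((p:ℝ) + 1) ^ M := by
  set ℓ : ℝ := Real.log 2 with hl_def
  set G : ℝ := Real.log (a * b) with hG_def
  have hl_lo : (0.6931471803 : ℝ) < ℓ := Real.log_two_gt_d9
  have hl_hi : ℓ < (0.6931471808 : ℝ) := Real.log_two_lt_d9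
  have hlpos : (0:ℝ) < ℓ := by linarith
  have hab8 : (8:ℝ) ≤ a * b := by nlinarith
  have hG3 : 3 * ℓ ≤ G := by
    have h8 : Real.log 8 ≤ Real.log (a * b) := Real.log_le_log (by norm_num) hab8
    have h83 : Real.log 8 = 3 * ℓ := by
      rw [show (8:ℝ) = 2 ^ 3 by norm_num, Real.log_pow]; push_cast; ring
    linarith
  clear_value ℓ G
  have hGpos : (0:ℝ) < G := by linarith
  have hppos : (0:ℝ) < (p:ℝ) := by exact_mod_cast hp1
  have hd1r : (1:ℝ) ≤ (d:ℝ) := by exact_mod_cast hd1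
  have hMr : (M:ℝ) = (d:ℝ) + (p:ℝ) := by rw [hM]; push_cast; ring
  have hCpos : (0:ℝ) < a^2*b^2 := by nlinarith
  have hb1 : (0:ℝ) < b - 1 := by linarith
  have hp1r : (0:ℝ) < (p:ℝ) + 1 := by linarith
  have hstep4 : ((M:ℝ)) * (b - 1) ≥ ((d:ℝ) + b - 2) * ((p:ℝ) + 1) := by
    rw [hMr]
    nlinarith [mul_nonneg (sub_nonneg.2 hd1r) (by linarith : (0:ℝ) ≤ b - 2 - (p:ℝ))]
  have hMbig : ((M:ℝ)) > (ℓ + 2*G) * ((p:ℝ) + 1) := by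
    have hkey := aux_key a b ℓ G ha2 hb4 hl_lo hl_hi hG3
    have hgt : (ℓ + 2*G) * (b-1) < (d:ℝ) + b - 2 := by linarith
    have hmul : ((ℓ + 2*G) * (b-1)) * ((p:ℝ)+1) < ((d:ℝ) + b - 2) * ((p:ℝ)+1) :=
      mul_lt_mul_of_pos_right hgt hp1r
    have hfin : ((ℓ + 2*G) * ((p:ℝ)+1)) * (b-1) < ((M:ℝ)) * (b-1) := by
      have h1 : ((ℓ + 2*G) * ((p:ℝ)+1)) * (b-1) = ((ℓ + 2*G) * (b-1)) * ((p:ℝ)+1) := by ring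
      linarith
    exact lt_of_mul_lt_mul_right hfin hb1.le
  have hlog2 : Real.log (a^2*b^2 + (p:ℝ)) ≤ ℓ + 2 * G := by
    have h1 : a^2*b^2 + (p:ℝ) ≤ 2 * (a^2*b^2) := by nlinarith
    have h2 : Real.log (a^2*b^2 + (p:ℝ)) ≤ Real.log (2 * (a^2*b^2)) :=
      Real.log_le_log (by positivity) h1
    have h3 : Real.log (2 * (a^2*b^2)) = ℓ + 2 * G := by
      rw [show 2 * (a^2*b^2) = 2 * (a*b)^2 by ring,
        Real.log_mul (by norm_num) (by positivity), Real.log_pow, hl_def, hG_def]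
      push_cast; ring
    linarith
  have hlog1 : (Real.log ((p:ℝ)+1) - Real.log p) * ((p:ℝ)+1) ≥ 1 := by
    have hx : (0:ℝ) < (p:ℝ) / ((p:ℝ)+1) := by positivity
    have h := Real.log_le_sub_one_of_pos hx
    rw [Real.log_div (ne_of_gt hppos) (by linarith)] at h
    have hfrac : (p:ℝ) / ((p:ℝ)+1) - 1 = -(1 / ((p:ℝ)+1)) := by field_simp; ring
    rw [hfrac] at h
    have h5 : 1 / ((p:ℝ)+1) ≤ Real.log ((p:ℝ)+1) - Real.log p := by linarith
    calc (1:ℝ) = (1/((p:ℝ)+1)) * ((p:ℝ)+1) := by field_simp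
      _ ≤ (Real.log ((p:ℝ)+1) - Real.log p) * ((p:ℝ)+1) :=
          mul_le_mul_of_nonneg_right h5 hp1r.le
  have hlogKRI : Real.log (a^2*b^2 + (p:ℝ)) + (M:ℝ) * Real.log p
      < (M:ℝ) * Real.log ((p:ℝ)+1) := by
    have hM0 : (0:ℝ) ≤ (M:ℝ) := by positivity
    have h1 : (M:ℝ) * 1 ≤ (M:ℝ) * ((Real.log ((p:ℝ)+1) - Real.log p) * ((p:ℝ)+1)) :=
      mul_le_mul_of_nonneg_left hlog1 hM0
    have h2 : Real.log (a^2*b^2 + (p:ℝ)) * ((p:ℝ)+1) ≤ (ℓ + 2*G) * ((p:ℝ)+1) :=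
      mul_le_mul_of_nonneg_right hlog2 hp1r.le
    have h3 : Real.log (a^2*b^2 + (p:ℝ)) * ((p:ℝ)+1)
        < ((M:ℝ) * (Real.log ((p:ℝ)+1) - Real.log p)) * ((p:ℝ)+1) := by linarith
    have h4 := lt_of_mul_lt_mul_right h3 hp1r.le
    linarith
  have hXpos : (0:ℝ) < (a^2*b^2 + (p:ℝ)) * (p:ℝ) ^ M := by positivity
  have hYpos : (0:ℝ) < ((p:ℝ)+1) ^ M := by positivity
  rw [← Real.log_lt_log_iff hXpos hYpos]
  rwa [Real.log_mul (by positivity) (by positivity), Real.log_pow, Real.log_pow]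

lemma aux_assemble (C : ℝ) (p d : ℕ) (hC : 0 < C) (hp1 : 1 ≤ p)
    (hKRI : (C + (p:ℝ)) * (p:ℝ) ^ (d+p) < ((p:ℝ)+1) ^ (d+p)) :
    C * (stirling (d+p) p : ℝ) < stirling (d+p+1) (p+1) := by
  have low := stirling_lower (d + p + 1) p
  have up := stirling_upper (d + p) p
  have lowR : (((p:ℝ)+1)) ^ (d+p+1)
      ≤ ((p+1).factorial : ℝ) * stirling (d+p+1) (p+1) + ((p:ℝ)+1) * (p:ℝ) ^ (d+p+1) := by
    exact_mod_cast low
  have upR : ((p.factorial : ℝ)) * stirling (d+p) p ≤ (p:ℝ) ^ (d+p) := by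
    exact_mod_cast up
  have hfact : ((p+1).factorial : ℝ) = ((p:ℝ)+1) * (p.factorial : ℝ) := by
    push_cast [Nat.factorial_succ]; ring
  have hp1r : (0:ℝ) < (p:ℝ) + 1 := by positivity
  have hmain : ((p+1).factorial : ℝ) * (C * (stirling (d+p) p : ℝ))
      < ((p+1).factorial : ℝ) * (stirling (d+p+1) (p+1) : ℝ) := by
    have e1 : ((p+1).factorial : ℝ) * (C * (stirling (d+p) p : ℝ))
        = C * ((p:ℝ)+1) * ((p.factorial : ℝ) * stirling (d+p) p) := by rw [hfact]; ring
    have e2 : C * ((p:ℝ)+1) * ((p.factorial : ℝ) * stirling (d+p) p)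
        ≤ C * ((p:ℝ)+1) * (p:ℝ)^(d+p) :=
      mul_le_mul_of_nonneg_left upR (by positivity)
    have e3 : C * ((p:ℝ)+1) * (p:ℝ)^(d+p)
        < ((p:ℝ)+1)^(d+p+1) - ((p:ℝ)+1) * (p:ℝ)^(d+p+1) := by
      have hpow1 : ((p:ℝ)+1)^(d+p+1) = ((p:ℝ)+1)^(d+p) * ((p:ℝ)+1) := pow_succ _ _
      have hpow2 : (p:ℝ)^(d+p+1) = (p:ℝ)^(d+p) * (p:ℝ) := pow_succ _ _
      have h := mul_lt_mul_of_pos_left hKRI hp1r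
      rw [hpow1, hpow2]
      nlinarith [h]
    calc ((p+1).factorial : ℝ) * (C * (stirling (d+p) p : ℝ))
        = C * ((p:ℝ)+1) * ((p.factorial : ℝ) * stirling (d+p) p) := e1
      _ ≤ C * ((p:ℝ)+1) * (p:ℝ)^(d+p) := e2
      _ < ((p:ℝ)+1)^(d+p+1) - ((p:ℝ)+1) * (p:ℝ)^(d+p+1) := e3
      _ ≤ ((p+1).factorial : ℝ) * (stirling (d+p+1) (p+1) : ℝ) := by linarith
  have hFpos : (0:ℝ) < ((p+1).factorial : ℝ) := by positivity
  exact lt_of_mul_lt_mul_left hmain hFpos.le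

lemma aux_arith (k t n : ℕ) (ht : 1 ≤ t) (hk : t + 3 ≤ k) (hn : (n : ℝ) ≥ 2 * Lkt k t) :
    k + 1 ≤ n ∧
      (n:ℝ) - k + (((k:ℝ) - t + 1)) - 2
        ≥ ((t:ℝ)+1) + 2 * ((k:ℝ) - t + 1) *
            Real.log (((t:ℝ)+1) * ((k:ℝ) - t + 1)) / Real.log 2 := by
  have ha2 : (2:ℝ) ≤ (t:ℝ) + 1 := by
    have : (1:ℝ) ≤ (t:ℝ) := by exact_mod_cast ht
    linarith
  have hb4 : (4:ℝ) ≤ (k:ℝ) - t + 1 := by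
    have : ((t:ℝ) + 3) ≤ (k:ℝ) := by exact_mod_cast hk
    linarith
  have hlpos : (0:ℝ) < Real.log 2 := Real.log_pos (by norm_num)
  have hab8 : (8:ℝ) ≤ ((t:ℝ)+1) * ((k:ℝ) - t + 1) := by nlinarith
  have hG3 : 3 * Real.log 2 ≤ Real.log (((t:ℝ)+1) * ((k:ℝ) - t + 1)) := by
    have h8 : Real.log 8 ≤ Real.log (((t:ℝ)+1) * ((k:ℝ) - t + 1)) :=
      Real.log_le_log (by norm_num) hab8
    have h83 : Real.log 8 = 3 * Real.log 2 := by
      rw [show (8:ℝ) = 2 ^ 3 by norm_num, Real.log_pow]; push_cast; ring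
    linarith
  have hL : Lkt k t = ((t:ℝ)+1) + ((k:ℝ) - t + 1) *
      (Real.log (((t:ℝ)+1) * ((k:ℝ) - t + 1)) / Real.log 2) := by
    rw [Lkt, Real.logb]
  set G : ℝ := Real.log (((t:ℝ)+1) * ((k:ℝ) - t + 1)) with hGdef
  have hGdiv : 3 ≤ G / Real.log 2 := by
    rw [le_div_iff₀ hlpos]; linarith
  have hnR : (n:ℝ) ≥ 2 * (((t:ℝ)+1) + ((k:ℝ) - t + 1) * (G / Real.log 2)) := by
    rw [← hL]; exact hn
  constructor
  · have hks : (k:ℝ) + 1 ≤ (n:ℝ) := by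
      have hbG : ((k:ℝ) - t + 1) * 3 ≤ ((k:ℝ) - t + 1) * (G / Real.log 2) :=
        mul_le_mul_of_nonneg_left hGdiv (by linarith)
      nlinarith
    exact_mod_cast hks
  · have e : 2 * ((k:ℝ) - t + 1) * G / Real.log 2
        = 2 * (((k:ℝ) - t + 1) * (G / Real.log 2)) := by ring
    rw [e]
    linarith

theorem stmt_5 (k t n : ℕ) (ht : 1 ≤ t) (hk : t + 3 ≤ k) (hn : (n : ℝ) ≥ 2 * Lkt k t) :
    ∀ s : ℕ, s ≤ k - t - 2 →
      ((t : ℝ) + 1) ^ 2 * ((k : ℝ) - t + 1) ^ 2 * stirling (n - t - s - 1) (k - t - s - 1) <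
        (stirling (n - t - s) (k - t - s) : ℝ) := by
  intro s hs
  obtain ⟨hnk0, hdb0⟩ := aux_arith k t n ht hk hn
  obtain ⟨d, hd1, hnd⟩ : ∃ d, 1 ≤ d ∧ n = k + d := ⟨n - k, by omega, by omega⟩
  obtain ⟨p, hp1, hjp, hjp1, hnts, hnts1, hpk⟩ :
      ∃ p, 1 ≤ p ∧ k - t - s = p + 1 ∧ k - t - s - 1 = p ∧ n - t - s = d + p + 1 ∧
        n - t - s - 1 = d + p ∧ p + 1 ≤ k - t :=
    ⟨k - t - s - 1, by omega, by omega, by omega, by omega, by omega, by omega⟩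
  rw [hnts1, hjp1, hnts, hjp]
  have ha2 : (2:ℝ) ≤ (t:ℝ) + 1 := by
    have : (1:ℝ) ≤ (t:ℝ) := by exact_mod_cast ht
    linarith
  have hb4 : (4:ℝ) ≤ (k:ℝ) - t + 1 := by
    have : ((t:ℝ) + 3) ≤ (k:ℝ) := by exact_mod_cast hk
    linarith
  have hpb : (p:ℝ) ≤ ((k:ℝ) - t + 1) - 2 := by
    have h1 : ((p:ℝ) + 1) ≤ ((k - t : ℕ) : ℝ) := by exact_mod_cast hpk
    have h2 : ((k - t : ℕ) : ℝ) = (k:ℝ) - t := by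
      have htk : t ≤ k := by omega
      push_cast [htk]; ring
    linarith [h1, h2.le, h2.ge]
  have hdr : ((d:ℕ):ℝ) = (n:ℝ) - k := by
    rw [hnd]; push_cast; ring
  have hdb : (d:ℝ) + ((k:ℝ) - t + 1) - 2
      ≥ ((t:ℝ)+1) + 2 * ((k:ℝ) - t + 1) *
          Real.log (((t:ℝ)+1) * ((k:ℝ) - t + 1)) / Real.log 2 := by
    rw [hdr]; linarith
  have hKRI := aux_KRI ((t:ℝ)+1) ((k:ℝ) - t + 1) p d (d+p) ha2 hb4 hpb hp1 hd1 rfl hdb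
  have hCpos : (0:ℝ) < ((t:ℝ)+1)^2 * ((k:ℝ) - t + 1)^2 :=
    mul_pos (pow_pos (by linarith : (0:ℝ) < (t:ℝ)+1) 2)
      (pow_pos (by linarith : (0:ℝ) < (k:ℝ) - t + 1) 2)
  exact aux_assemble (((t:ℝ)+1)^2 * ((k:ℝ) - t + 1)^2) p d hCpos hp1 hKRI
end

section
/- Let k ≥ t+3 ≥ 4 and n ≥ 2L(k,t), where L(k,t) = (t+1) + (k-t+1)·log₂((t+1)(k-t+1)). Then for every integer s with 0 ≤ s ≤ k-t-2, S(n-t-s-1, k-t-s) > (t+1)²(k-t+1)·S(n-t-s-1, k-t-s-1). -/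
open Finset in
lemma stirling_fact_eq (m : ℕ) : ∀ j : ℕ, ((j.factorial : ℤ)) * stirling m j
    = ∑ i ∈ range (j + 1), (-1 : ℤ) ^ i * j.choose i * ((j - i : ℕ) : ℤ) ^ m := by
  induction m with
  | zero =>
    intro j
    match j with
    | 0 => simp [stirling]
    | j + 1 =>
      have h := Int.alternating_sum_range_choose (n := j + 1)
      rw [if_neg (by omega)] at h
      simp only [pow_zero, mul_one, h, stirling]
      simp
  | succ m ih =>
    intro j
    match j with
    | 0 => simp [stirling]
    | j + 1 =>
      have hrec : stirling (m + 1) (j + 1) = stirling m j + (j + 1) * stirling m (j + 1) := rfl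
      have key1 : ∀ i ∈ range (j + 2), (-1 : ℤ) ^ i * (j + 1).choose i * ((j + 1 - i : ℕ) : ℤ) ^ (m + 1)
          = ((j : ℤ) + 1) * ((-1 : ℤ) ^ i * j.choose i * ((j + 1 - i : ℕ) : ℤ) ^ m) := by
        intro i _
        have h : (((j + 1).choose i : ℤ)) * ((j + 1 - i : ℕ) : ℤ) = (j.choose i : ℤ) * ((j : ℤ) + 1) := by
          have := (Nat.choose_mul_succ_eq j i).symm
          exact_mod_cast congrArg (Nat.cast : ℕ → ℤ) this
        linear_combination ((-1 : ℤ) ^ i * ((j + 1 - i : ℕ) : ℤ) ^ m) * h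
      -- combine
      rw [Finset.sum_congr rfl key1, ← Finset.mul_sum]
      -- drop last term of the sum (i = j+1)
      have key2 : ∑ i ∈ range (j + 2), (-1 : ℤ) ^ i * j.choose i * ((j + 1 - i : ℕ) : ℤ) ^ m
          = (∑ i ∈ range (j + 1), (-1 : ℤ) ^ i * j.choose i * ((j - i : ℕ) : ℤ) ^ m)
            + (∑ i ∈ range (j + 2), (-1 : ℤ) ^ i * (j + 1).choose i * ((j + 1 - i : ℕ) : ℤ) ^ m) := by
        rw [Finset.sum_range_succ' (fun i => (-1 : ℤ) ^ i * j.choose i * ((j + 1 - i : ℕ) : ℤ) ^ m) (j + 1),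
          Finset.sum_range_succ' (fun i => (-1 : ℤ) ^ i * (j + 1).choose i * ((j + 1 - i : ℕ) : ℤ) ^ m) (j + 1)]
        simp only [Nat.succ_sub_succ, Nat.choose_zero_right, Nat.sub_zero, pow_zero, one_mul,
          Nat.cast_one, mul_one]
        have hT : ∀ x ∈ range (j + 1), (-1 : ℤ) ^ (x + 1) * ((j + 1).choose (x + 1)) * ((j - x : ℕ) : ℤ) ^ m
            = (-1 : ℤ) ^ (x + 1) * (j.choose (x + 1)) * ((j - x : ℕ) : ℤ) ^ m
              + (-1 : ℤ) ^ (x + 1) * (j.choose x) * ((j - x : ℕ) : ℤ) ^ m := by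
          intro x _
          have hp : (((j + 1).choose (x + 1) : ℤ)) = (j.choose x : ℤ) + (j.choose (x + 1) : ℤ) := by
            exact_mod_cast congrArg (Nat.cast : ℕ → ℤ) (Nat.choose_succ_succ j x)
          linear_combination ((-1 : ℤ) ^ (x + 1) * ((j - x : ℕ) : ℤ) ^ m) * hp
        rw [Finset.sum_congr rfl hT, Finset.sum_add_distrib]
        have hneg : (∑ x ∈ range (j + 1), (-1 : ℤ) ^ (x + 1) * (j.choose x) * ((j - x : ℕ) : ℤ) ^ m)
            + (∑ i ∈ range (j + 1), (-1 : ℤ) ^ i * j.choose i * ((j - i : ℕ) : ℤ) ^ m) = 0 := by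
          rw [← Finset.sum_add_distrib]
          apply Finset.sum_eq_zero
          intro x _
          ring
        linarith [hneg]
      rw [key2, hrec]
      have hf : (((j + 1).factorial : ℤ)) = ((j : ℤ) + 1) * (j.factorial : ℤ) := by
        push_cast [Nat.factorial_succ]
        ring
      push_cast
      linear_combination ((stirling m j : ℤ)) * hf + ((j : ℤ) + 1) * (ih j) + ((j : ℤ) + 1) * (ih (j + 1))

open Finset in
lemma alt_sum_bounds : ∀ (K : ℕ) (b : ℕ → ℤ), (∀ i, 0 ≤ b i) → (∀ i, b (i + 1) ≤ b i) →
    0 ≤ ∑ i ∈ range K, (-1 : ℤ) ^ i * b i ∧ ∑ i ∈ range K, (-1 : ℤ) ^ i * b i ≤ b 0 := by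
  intro K
  induction K with
  | zero => intro b hb _; simpa using hb 0
  | succ K ih =>
    intro b hb hmono
    have hpeel : ∑ i ∈ range (K + 1), (-1 : ℤ) ^ i * b i
        = b 0 - ∑ i ∈ range K, (-1 : ℤ) ^ i * b (i + 1) := by
      rw [Finset.sum_range_succ' (fun i => (-1 : ℤ) ^ i * b i) K]
      have : ∀ x ∈ range K, (-1 : ℤ) ^ (x + 1) * b (x + 1) = -((-1 : ℤ) ^ x * b (x + 1)) := by
        intro x _; ring
      rw [Finset.sum_congr rfl this, Finset.sum_neg_distrib]
      simp; ring
    obtain ⟨h1, h2⟩ := ih (fun i => b (i + 1)) (fun i => hb (i + 1)) (fun i => hmono (i + 1))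
    rw [hpeel]
    constructor
    · have := hmono 0; linarith
    · linarith

open Finset in
lemma alt_sum_lower (K : ℕ) (b : ℕ → ℤ) (hb : ∀ i, 0 ≤ b i) (hmono : ∀ i, b (i + 1) ≤ b i)
    (hsum : ∀ (K : ℕ) (b : ℕ → ℤ), (∀ i, 0 ≤ b i) → (∀ i, b (i + 1) ≤ b i) →
      0 ≤ ∑ i ∈ range K, (-1 : ℤ) ^ i * b i ∧ ∑ i ∈ range K, (-1 : ℤ) ^ i * b i ≤ b 0) :
    b 0 - b 1 ≤ ∑ i ∈ range (K + 1), (-1 : ℤ) ^ i * b i := by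
  have hpeel : ∑ i ∈ range (K + 1), (-1 : ℤ) ^ i * b i
      = b 0 - ∑ i ∈ range K, (-1 : ℤ) ^ i * b (i + 1) := by
    rw [Finset.sum_range_succ' (fun i => (-1 : ℤ) ^ i * b i) K]
    have : ∀ x ∈ range K, (-1 : ℤ) ^ (x + 1) * b (x + 1) = -((-1 : ℤ) ^ x * b (x + 1)) := by
      intro x _; ring
    rw [Finset.sum_congr rfl this, Finset.sum_neg_distrib]
    simp only [pow_zero, one_mul]
    ring
  obtain ⟨_, h2⟩ := hsum K (fun i => b (i + 1)) (fun i => hb (i + 1)) (fun i => hmono (i + 1))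
  rw [hpeel]
  linarith

-- Bernoulli-type: 2^(m/b) ≤ (b/(b-1))^m for 2 ≤ b
lemma ratio_rpow (b m : ℕ) (hb : 2 ≤ b) :
    (2 : ℝ) ^ ((m : ℝ) / b) ≤ ((b : ℝ) / ((b : ℝ) - 1)) ^ m := by
  have hb1 : (2 : ℝ) ≤ (b : ℝ) := by exact_mod_cast hb
  have hc : (0 : ℝ) < (b : ℝ) - 1 := by linarith
  have hy : (0 : ℝ) ≤ (b : ℝ) / ((b : ℝ) - 1) := by positivity
  set y : ℝ := (b : ℝ) / ((b : ℝ) - 1) with hydef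
  have h1 : (2 : ℝ) ≤ y ^ b := by
    have hm2 : (-2:ℝ) ≤ 1 / ((b : ℝ) - 1) := by
      have : (0:ℝ) ≤ 1 / ((b : ℝ) - 1) := by positivity
      linarith
    have hber : 1 + (b : ℝ) * (1 / ((b : ℝ) - 1)) ≤ (1 + 1 / ((b : ℝ) - 1)) ^ b :=
      one_add_mul_le_pow hm2 b
    have hyeq : 1 + 1 / ((b : ℝ) - 1) = y := by
      rw [hydef]; field_simp; ring
    rw [hyeq] at hber
    have h15 : (1:ℝ) ≤ (b : ℝ) * (1 / ((b : ℝ) - 1)) := by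
      rw [mul_one_div, le_div_iff₀ hc]; linarith
    linarith
  -- 2^(m/b) ≤ (y^b)^(m/b) = y^m
  have h2 : (2 : ℝ) ^ ((m : ℝ) / b) ≤ (y ^ b) ^ ((m : ℝ) / b) :=
    Real.rpow_le_rpow (by norm_num) h1 (by positivity)
  calc (2 : ℝ) ^ ((m : ℝ) / b) ≤ (y ^ b) ^ ((m : ℝ) / b) := h2
    _ = y ^ ((b : ℝ) * ((m : ℝ) / b)) := by
        rw [← Real.rpow_natCast y b, ← Real.rpow_mul hy]
    _ = y ^ (m : ℝ) := by
        congr 1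
        field_simp
    _ = y ^ m := Real.rpow_natCast y m

-- b * (b-1)^m ≤ b^m when b ≤ 2^(m/b)
lemma pow_ratio (b m : ℕ) (hb : 2 ≤ b) (h : (b : ℝ) ≤ (2 : ℝ) ^ ((m : ℝ) / b)) :
    (b : ℝ) * ((b - 1 : ℕ) : ℝ) ^ m ≤ (b : ℝ) ^ m := by
  have hb1 : (2 : ℝ) ≤ (b : ℝ) := by exact_mod_cast hb
  have hc : (0 : ℝ) < (b : ℝ) - 1 := by linarith
  have hcast : ((b - 1 : ℕ) : ℝ) = (b : ℝ) - 1 := by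
    have : 1 ≤ b := by omega
    push_cast [this]; ring
  rw [hcast]
  have h2 : (b : ℝ) ≤ ((b : ℝ) / ((b : ℝ) - 1)) ^ m := h.trans (ratio_rpow b m hb)
  have h3 : (b : ℝ) * ((b : ℝ) - 1) ^ m ≤ ((b : ℝ) / ((b : ℝ) - 1)) ^ m * ((b : ℝ) - 1) ^ m := by
    apply mul_le_mul_of_nonneg_right h2 (by positivity)
  calc (b : ℝ) * ((b : ℝ) - 1) ^ m ≤ ((b : ℝ) / ((b : ℝ) - 1)) ^ m * ((b : ℝ) - 1) ^ m := h3
    _ = (b : ℝ) ^ m := by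
        rw [← mul_pow, div_mul_cancel₀ _ (ne_of_gt hc)]

-- antitone terms
lemma term_anti (m r : ℕ) (hm : 1 ≤ m)
    (H : ∀ b : ℕ, 2 ≤ b → b ≤ r → (b : ℤ) * ((b - 1 : ℕ) : ℤ) ^ m ≤ (b : ℤ) ^ m) :
    ∀ i, (r.choose (i + 1) : ℤ) * ((r - (i + 1) : ℕ) : ℤ) ^ m
      ≤ (r.choose i : ℤ) * ((r - i : ℕ) : ℤ) ^ m := by
  intro i
  rcases le_or_gt r (i + 1) with hcase | hcase
  · rcases eq_or_lt_of_le hcase with hcase | hcase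
    · -- i + 1 = r : LHS has (r - r)^m = 0
      rw [← hcase]
      simp [Nat.sub_self, zero_pow (by omega : m ≠ 0)]
      positivity
    · rw [Nat.choose_eq_zero_of_lt hcase]
      simp
      positivity
  · -- i + 1 < r, so b := r - i ≥ 2
    set b := r - i with hbdef
    have hb2 : 2 ≤ b := by omega
    have hbr : b ≤ r := by omega
    have hch : (r.choose (i + 1) : ℤ) ≤ (r.choose i : ℤ) * b := by
      have h1 : r.choose (i + 1) ≤ r.choose (i + 1) * (i + 1) := Nat.le_mul_of_pos_right _ (by omega)
      have h2 : r.choose (i + 1) * (i + 1) = r.choose i * (r - i) := Nat.choose_succ_right_eq r i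
      exact_mod_cast h1.trans_eq h2
    have hsub : r - (i + 1) = b - 1 := by omega
    rw [hsub]
    have hHb := H b hb2 hbr
    have hnn : (0 : ℤ) ≤ ((b - 1 : ℕ) : ℤ) ^ m := by positivity
    calc (r.choose (i + 1) : ℤ) * ((b - 1 : ℕ) : ℤ) ^ m
        ≤ ((r.choose i : ℤ) * b) * ((b - 1 : ℕ) : ℤ) ^ m := by
          apply mul_le_mul_of_nonneg_right hch hnn
      _ = (r.choose i : ℤ) * ((b : ℤ) * ((b - 1 : ℕ) : ℤ) ^ m) := by ring
      _ ≤ (r.choose i : ℤ) * ((b : ℤ) ^ m) := by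
          apply mul_le_mul_of_nonneg_left hHb (by positivity)
      _ = (r.choose i : ℤ) * ((r - i : ℕ) : ℤ) ^ m := by rw [← hbdef]

lemma hCb_aux (tr qr jr : ℝ) (ht : 1 ≤ tr) (hq : 3 ≤ qr) (hj : jr ≤ qr) (hj0 : 0 ≤ jr) :
    jr * ((tr + 1) ^ 2 * (qr + 1) + 1) ≤ ((tr + 1) * (qr + 1)) ^ 2 := by
  have h4 : (4 : ℝ) ≤ (tr + 1) ^ 2 := by nlinarith
  have h5 : (4 : ℝ) * (qr + 1) ≤ (tr + 1) ^ 2 * (qr + 1) := by nlinarith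
  have hA : qr ≤ (tr + 1) ^ 2 * (qr + 1) := by linarith
  have h6 : jr * ((tr + 1) ^ 2 * (qr + 1) + 1) ≤ qr * ((tr + 1) ^ 2 * (qr + 1) + 1) := by
    apply mul_le_mul_of_nonneg_right hj
    nlinarith
  have h7 : qr * ((tr + 1) ^ 2 * (qr + 1) + 1) ≤ ((tr + 1) * (qr + 1)) ^ 2 := by nlinarith [hA]
  linarith

set_option maxHeartbeats 1000000 in
theorem stmt_6 (k t n : ℕ) (ht : 1 ≤ t) (hk : t + 3 ≤ k) (hn : (n : ℝ) ≥ 2 * Lkt k t) :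
    ∀ s : ℕ, s ≤ k - t - 2 →
      ((t : ℝ) + 1) ^ 2 * ((k : ℝ) - t + 1) * stirling (n - t - s - 1) (k - t - s - 1) <
        (stirling (n - t - s - 1) (k - t - s) : ℝ) := by
  intro s hs
  have hq3 : 3 ≤ k - t := by omega
  set q := k - t with hqdef
  set j := q - s with hjdef
  set m := n - t - s - 1 with hmdef
  have hj2 : 2 ≤ j := by omega
  have hjq : j ≤ q := by omega
  have hqr : (q : ℝ) = (k : ℝ) - t := by
    have h1 : t ≤ k := by omega
    rw [hqdef]
    push_cast [h1]
    ring
  set x : ℝ := ((t : ℝ) + 1) * ((q : ℝ) + 1) with hxdef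
  set l : ℝ := Real.logb 2 x with hldef
  have ht1 : (1 : ℝ) ≤ (t : ℝ) := by exact_mod_cast ht
  have hq3r : (3 : ℝ) ≤ (q : ℝ) := by exact_mod_cast hq3
  have hx8 : (8 : ℝ) ≤ x := by nlinarith
  have hxpos : (0 : ℝ) < x := by linarith
  have hl3 : (3 : ℝ) ≤ l := by
    have h8 : Real.logb 2 8 = 3 := by
      rw [show (8 : ℝ) = 2 ^ (3 : ℕ) by norm_num, Real.logb_pow]
      simp [Real.logb_self_eq_one]
    rw [hldef, ← h8]
    exact Real.logb_le_logb_of_le (by norm_num) (by norm_num) hx8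
  have hLkt : Lkt k t = ((t : ℝ) + 1) + ((q : ℝ) + 1) * l := by
    unfold Lkt
    rw [hldef, hxdef, ← hqr]
  have hn2 : (n : ℝ) ≥ 2 * ((t : ℝ) + 1) + 2 * ((q : ℝ) + 1) * l := by
    rw [hLkt] at hn; linarith
  have hn3 : (n : ℝ) ≥ 2 * t + 6 * q + 8 := by nlinarith
  have hnN : 2 * t + 6 * q + 8 ≤ n := by exact_mod_cast hn3
  have hmeq : m + (t + s + 1) = n := by omega
  have hmr : (m : ℝ) = (n : ℝ) - t - s - 1 := by
    have h := congrArg (Nat.cast : ℕ → ℝ) hmeq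
    push_cast at h
    linarith
  have hm1 : 1 ≤ m := by omega
  have hjr : (j : ℝ) = (q : ℝ) - s := by
    have h : j + s = q := by omega
    have h2 := congrArg (Nat.cast : ℕ → ℝ) h
    push_cast at h2
    linarith
  have hsr : (s : ℝ) ≤ (q : ℝ) - 2 := by
    have h : s + 2 ≤ q := by omega
    have h2 : ((s + 2 : ℕ) : ℝ) ≤ (q : ℝ) := by exact_mod_cast h
    push_cast at h2
    linarith
  have hjpos : (0 : ℝ) < (j : ℝ) := by
    have : (2 : ℝ) ≤ (j : ℝ) := by exact_mod_cast hj2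
    linarith
  have hs0 : (0 : ℝ) ≤ (s : ℝ) := by positivity
  have hmj : 2 * (j : ℝ) * l < (m : ℝ) := by
    have key : 6 * ((s : ℝ) + 1) ≤ 2 * ((s : ℝ) + 1) * l := by nlinarith
    have h2jl : 2 * (j : ℝ) * l = 2 * ((q : ℝ) + 1) * l - 2 * ((s : ℝ) + 1) * l := by
      rw [hjr]; ring
    linarith
  have hmjdiv : 2 * l < (m : ℝ) / j := by
    rw [lt_div_iff₀ hjpos]
    nlinarith
  have hx2 : x ^ 2 < (2 : ℝ) ^ ((m : ℝ) / j) := by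
    have hxl : (2 : ℝ) ^ l = x := Real.rpow_logb (by norm_num) (by norm_num) hxpos
    have h2l : (2 : ℝ) ^ (2 * l) = x ^ 2 := by
      calc (2 : ℝ) ^ (2 * l) = ((2 : ℝ) ^ l) ^ (2 : ℕ) := by
            rw [← Real.rpow_natCast ((2 : ℝ) ^ l) 2, ← Real.rpow_mul (by norm_num : (0:ℝ) ≤ 2)]
            norm_num [mul_comm]
        _ = x ^ 2 := by rw [hxl]
    rw [← h2l]
    exact (Real.rpow_lt_rpow_left_iff (by norm_num : (1:ℝ) < 2)).mpr hmjdiv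
  have hjx : (j : ℝ) ≤ (2 : ℝ) ^ ((m : ℝ) / j) := by
    have hjqr : (j : ℝ) ≤ (q : ℝ) := by exact_mod_cast hjq
    have hjx2 : (j : ℝ) ≤ x ^ 2 := by nlinarith
    linarith
  have H : ∀ b : ℕ, 2 ≤ b → b ≤ j → (b : ℤ) * ((b - 1 : ℕ) : ℤ) ^ m ≤ (b : ℤ) ^ m := by
    intro b hb2 hbj
    have h1 : (b : ℝ) ≤ (j : ℝ) := by exact_mod_cast hbj
    have hbpos : (0 : ℝ) < (b : ℝ) := by
      have : (2 : ℝ) ≤ (b : ℝ) := by exact_mod_cast hb2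
      linarith
    have h2 : (m : ℝ) / j ≤ (m : ℝ) / b := by
      gcongr
      all_goals positivity
    have h3 : (2 : ℝ) ^ ((m : ℝ) / j) ≤ (2 : ℝ) ^ ((m : ℝ) / b) :=
      Real.rpow_le_rpow_of_exponent_le (by norm_num) h2
    have := pow_ratio b m hb2 (h1.trans (hjx.trans h3))
    exact_mod_cast this
  -- the term sequences
  have hbnn : ∀ (r : ℕ) (i : ℕ), (0 : ℤ) ≤ (r.choose i : ℤ) * ((r - i : ℕ) : ℤ) ^ m := by
    intro r i; positivity
  have hmono_j := term_anti m j hm1 H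
  have hmono_j1 := term_anti m (j - 1) hm1 (fun b h1 h2 => H b h1 (by omega))
  have hU : ((j - 1).factorial : ℤ) * stirling m (j - 1) ≤ (((j - 1 : ℕ) : ℤ)) ^ m := by
    rw [stirling_fact_eq m (j - 1)]
    have h := (alt_sum_bounds ((j - 1) + 1)
      (fun i => ((j - 1).choose i : ℤ) * ((j - 1 - i : ℕ) : ℤ) ^ m) (hbnn (j - 1)) hmono_j1).2
    simpa [mul_assoc] using h
  have hLo : ((j : ℕ) : ℤ) ^ m - (j : ℤ) * (((j - 1 : ℕ) : ℤ)) ^ m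
      ≤ (j.factorial : ℤ) * stirling m j := by
    rw [stirling_fact_eq m j]
    have h := alt_sum_lower j (fun i => (j.choose i : ℤ) * ((j - i : ℕ) : ℤ) ^ m)
      (hbnn j) hmono_j alt_sum_bounds
    simpa [Nat.choose_one_right, mul_assoc] using h
  -- move to ℝ
  have hUr : (stirling m (j - 1) : ℝ) * ((j - 1).factorial : ℝ) ≤ (((j - 1 : ℕ) : ℝ)) ^ m := by
    have := hU
    have h2 : (((j - 1).factorial : ℝ)) * (stirling m (j - 1) : ℝ) ≤ (((j - 1 : ℕ) : ℝ)) ^ m := by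
      exact_mod_cast this
    linarith [h2]
  have hLor : ((j : ℝ)) ^ m - (j : ℝ) * (((j - 1 : ℕ) : ℝ)) ^ m
      ≤ (j.factorial : ℝ) * (stirling m j : ℝ) := by exact_mod_cast hLo
  have hfact : (j.factorial : ℝ) = (j : ℝ) * ((j - 1).factorial : ℝ) := by
    have h : j - 1 + 1 = j := by omega
    rw [← h, Nat.factorial_succ]
    push_cast
    ring
  have hj1cast : ((j - 1 : ℕ) : ℝ) = (j : ℝ) - 1 := by
    have h : (1:ℕ) ≤ j := by omega
    push_cast [h]
    ring
  set C : ℝ := ((t : ℝ) + 1) ^ 2 * ((q : ℝ) + 1) with hCdef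
  have hCpos : (0 : ℝ) < C := by rw [hCdef]; nlinarith
  have hCb : (j : ℝ) * (C + 1) ≤ x ^ 2 := by
    have hjqr : (j : ℝ) ≤ (q : ℝ) := by exact_mod_cast hjq
    rw [hCdef, hxdef]
    exact hCb_aux (t : ℝ) (q : ℝ) (j : ℝ) ht1 hq3r hjqr hjpos.le
  have hrr : (2 : ℝ) ^ ((m : ℝ) / j) ≤ ((j : ℝ) / ((j : ℝ) - 1)) ^ m := ratio_rpow j m hj2
  have hP0 : (0 : ℝ) < ((j : ℝ) - 1) ^ m := by
    have h1 : (2 : ℝ) ≤ (j : ℝ) := by exact_mod_cast hj2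
    exact pow_pos (by linarith) m
  have hkey : (j : ℝ) * (C + 1) * (((j - 1 : ℕ) : ℝ)) ^ m < (j : ℝ) ^ m := by
    rw [hj1cast]
    calc (j : ℝ) * (C + 1) * ((j : ℝ) - 1) ^ m
        < (2 : ℝ) ^ ((m : ℝ) / j) * ((j : ℝ) - 1) ^ m := by
          apply mul_lt_mul_of_pos_right (lt_of_le_of_lt hCb hx2) hP0
      _ ≤ ((j : ℝ) / ((j : ℝ) - 1)) ^ m * ((j : ℝ) - 1) ^ m :=
          mul_le_mul_of_nonneg_right hrr hP0.le
      _ = (j : ℝ) ^ m := by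
          rw [← mul_pow, div_mul_cancel₀]
          have : (2 : ℝ) ≤ (j : ℝ) := by exact_mod_cast hj2
          intro hzero
          linarith [hzero]
  -- conclude
  rw [show (k : ℝ) - t + 1 = (q : ℝ) + 1 by rw [hqr]]
  show C * (stirling m (j - 1) : ℝ) < (stirling m j : ℝ)
  have hjfpos : (0 : ℝ) < (j.factorial : ℝ) := by
    exact_mod_cast Nat.factorial_pos j
  rw [← mul_lt_mul_iff_of_pos_right hjfpos]
  calc C * (stirling m (j - 1) : ℝ) * (j.factorial : ℝ)
      = (C * (j : ℝ)) * ((stirling m (j - 1) : ℝ) * ((j - 1).factorial : ℝ)) := by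
        rw [hfact]; ring
    _ ≤ (C * (j : ℝ)) * (((j - 1 : ℕ) : ℝ)) ^ m := by
        apply mul_le_mul_of_nonneg_left hUr (by positivity)
    _ < (j : ℝ) ^ m - (j : ℝ) * (((j - 1 : ℕ) : ℝ)) ^ m := by nlinarith [hkey]
    _ ≤ (j.factorial : ℝ) * (stirling m j : ℝ) := hLor
    _ = (stirling m j : ℝ) * (j.factorial : ℝ) := by ring
end

section
/- Let k ≥ t+3 ≥ 4 and n ≥ 2L(k,t), where L(k,t) = (t+1) + (k-t+1)·log₂((t+1)(k-t+1)). Then S(n-t-3, k-t-1) > t·S(n-t-2, k-t-2). -/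
/-- number of surjections from an n-set onto a k-set -/
def surj : ℕ → ℕ → ℕ
  | 0, 0 => 1
  | 0, _ + 1 => 0
  | _ + 1, 0 => 0
  | n + 1, k + 1 => (k + 1) * (surj n k + surj n (k + 1))

lemma surj_eq (n k : ℕ) : surj n k = Nat.factorial k * stirling n k := by
  induction n generalizing k with
  | zero => cases k <;> simp [surj, stirling]
  | succ n ih =>
    cases k with
    | zero => simp [surj, stirling]
    | succ k =>
      have h1 : surj (n+1) (k+1) = (k + 1) * (surj n k + surj n (k + 1)) := rfl
      have h2 : stirling (n+1) (k+1) = stirling n k + (k + 1) * stirling n (k + 1) := rfl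
      rw [h1, h2, ih, ih, Nat.factorial_succ]
      ring

lemma sum_choose_surj (n K : ℕ) :
    ∑ j ∈ Finset.range (K+1), K.choose j * surj n j = K ^ n := by
  induction n generalizing K with
  | zero =>
    rw [Finset.sum_range_succ']
    have : ∀ j, K.choose (j+1) * surj 0 (j+1) = 0 := by intro j; simp [surj]
    simp [this, surj]
  | succ n ih =>
    cases K with
    | zero => simp [surj]
    | succ K =>
      rw [Finset.sum_range_succ']
      have h0 : (K+1).choose 0 * surj (n+1) 0 = 0 := by simp [surj]
      rw [h0, add_zero]
      have hterm : ∀ j, (K+1).choose (j+1) * surj (n+1) (j+1)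
          = (K+1) * (K.choose j * surj n j + K.choose j * surj n (j+1)) := by
        intro j
        have h1 : surj (n+1) (j+1) = (j+1) * (surj n j + surj n (j+1)) := rfl
        have h2 : (K+1) * K.choose j = (K+1).choose (j+1) * (j+1) :=
          Nat.add_one_mul_choose_eq K j
        calc (K+1).choose (j+1) * surj (n+1) (j+1)
            = ((K+1).choose (j+1) * (j+1)) * (surj n j + surj n (j+1)) := by
              rw [h1]; ring
          _ = (K+1) * (K.choose j * surj n j + K.choose j * surj n (j+1)) := by
              rw [← h2]; ring
      rw [Finset.sum_congr rfl (fun j _ => hterm j), ← Finset.mul_sum,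
        Finset.sum_add_distrib]
      have hB : (∑ j ∈ Finset.range (K+1), K.choose j * surj n j)
          + ∑ j ∈ Finset.range (K+1), K.choose j * surj n (j+1)
          = (K+1) ^ n := by
        have e1 : (K+1:ℕ) ^ n = ∑ j ∈ Finset.range (K+2), (K+1).choose j * surj n j :=
          (ih (K+1)).symm
        rw [Finset.sum_range_succ' _ (K+1)] at e1
        have e2 : ∀ j, (K+1).choose (j+1) * surj n (j+1)
            = K.choose j * surj n (j+1) + K.choose (j+1) * surj n (j+1) := by
          intro j
          rw [Nat.choose_succ_succ, Nat.add_mul]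
        rw [Finset.sum_congr rfl (fun j _ => e2 j), Finset.sum_add_distrib] at e1
        have e3 : (∑ j ∈ Finset.range (K+1), K.choose (j+1) * surj n (j+1))
            + K.choose 0 * surj n 0 = K ^ n := by
          rw [← Finset.sum_range_succ' (fun j => K.choose j * surj n j) (K+1)]
          rw [Finset.sum_range_succ]
          simp [Nat.choose_succ_self, ih K]
        simp only [Nat.choose_zero_right, one_mul] at e1 e3
        rw [ih K, e1, ← e3]
        ring
      rw [ih K] at hB ⊢
      rw [hB]
      ring

lemma surj_le (n k : ℕ) : surj n k ≤ k ^ n := by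
  calc surj n k = k.choose k * surj n k := by simp
    _ ≤ ∑ j ∈ Finset.range (k+1), k.choose j * surj n j :=
        Finset.single_le_sum (f := fun j => k.choose j * surj n j)
          (fun i _ => Nat.zero_le _) (Finset.self_mem_range_succ k)
    _ = k ^ n := sum_choose_surj n k

lemma geom_sum_le (g : ℕ → ℕ) (N : ℕ) (h : ∀ j, j + 1 < N → 2 * g j ≤ g (j+1)) :
    ∑ j ∈ Finset.range N, g j ≤ 2 * g (N - 1) := by
  induction N with
  | zero => simp
  | succ N ih =>
    cases N with
    | zero => simp [Finset.sum_range_one]; omega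
    | succ N =>
      rw [Finset.sum_range_succ]
      have h1 : 2 * g N ≤ g (N+1) := h N (by omega)
      have h2 : ∑ j ∈ Finset.range (N+1), g j ≤ 2 * g N :=
        ih (fun j hj => h j (by omega))
      simp only [Nat.add_sub_cancel]
      omega

lemma pow_two_term (a n : ℕ) : a ^ (n+1) + (n+1) * a ^ n ≤ (a+1) ^ (n+1) := by
  induction n with
  | zero => simpa using Nat.le_refl _
  | succ n ih =>
    calc a ^ (n+2) + (n+2) * a ^ (n+1)
        ≤ a^(n+2) + (n+2)*a^(n+1) + (n+1)*a^n := Nat.le_add_right _ _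
      _ = (a^(n+1) + (n+1) * a^n) * (a+1) := by ring
      _ ≤ (a+1)^(n+1) * (a+1) := Nat.mul_le_mul_right _ ih
      _ = (a+1)^(n+2) := by ring

lemma two_mul_pow_self_le (j : ℕ) (hj : 1 ≤ j) : 2 * j ^ j ≤ (j+1) ^ j := by
  obtain ⟨i, rfl⟩ : ∃ i, j = i+1 := ⟨j-1, by omega⟩
  have h := pow_two_term (i+1) i
  have h2 : (i+1) * (i+1)^i = (i+1)^(i+1) := by ring
  omega

lemma pow_shift_le (b s n : ℕ) (hb : 1 ≤ b) (hn : b * s ≤ n) :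
    2 ^ s * b ^ n ≤ (b+1) ^ n := by
  have h1 : 2^s * b^(b*s) = (2 * b^b)^s := by rw [mul_pow, ← pow_mul]
  have h2 : (2*b^b)^s ≤ ((b+1)^b)^s := Nat.pow_le_pow_left (two_mul_pow_self_le b hb) s
  calc 2^s * b^n = 2^s * b^(b*s) * b^(n - b*s) := by
        rw [mul_assoc, ← pow_add]; congr 2; omega
    _ ≤ (b+1)^(b*s) * (b+1)^(n - b*s) := by
        refine Nat.mul_le_mul ?_ (Nat.pow_le_pow_left (by omega) _)
        rw [h1, pow_mul]; exact h2
    _ = (b+1)^n := by rw [← pow_add]; congr 1; omega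

lemma key_s7 (t a m ℓ : ℕ) (ht : 1 ≤ t) (ha : 1 ≤ a) (hl : 3 ≤ ℓ)
    (hm1 : 1 ≤ m)
    (hml : (a - 1) * (ℓ + 2) ≤ m)
    (hapow : a + 1 ≤ 2 ^ (ℓ + 1))
    (h2s : (t + 1) * (a + 1) ^ 2 < 2 ^ (m / a)) :
    t * stirling (m + 1) a < stirling m (a + 1) := by
  set s := m / a with hs
  have has : a * s ≤ m := by rw [hs]; exact Nat.mul_div_le m a
  -- identity split
  have hid := sum_choose_surj m (a + 1)
  rw [Finset.sum_range_succ] at hid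
  simp only [Nat.choose_self, one_mul] at hid
  -- rest bound
  have hrest : ∑ j ∈ Finset.range (a + 1), (a + 1).choose j * surj m j
      ≤ 2 * ((a + 1) * a ^ m) := by
    have step1 : ∑ j ∈ Finset.range (a + 1), (a + 1).choose j * surj m j
        ≤ ∑ j ∈ Finset.range (a + 1), (a + 1).choose j * j ^ m :=
      Finset.sum_le_sum (fun j _ => Nat.mul_le_mul_left _ (surj_le m j))
    have step2 : ∑ j ∈ Finset.range (a + 1), (a + 1).choose j * j ^ m
        ≤ 2 * ((a + 1).choose a * a ^ m) := by
      have := geom_sum_le (fun j => (a + 1).choose j * j ^ m) (a + 1) ?_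
      · simpa using this
      · intro j hj
        rcases Nat.eq_zero_or_pos j with rfl | hj1
        · have : (0:ℕ) ^ m = 0 := Nat.zero_pow (by omega)
          simp [this]
        · -- 1 ≤ j, j + 1 < a + 1
          have hja : j + 1 ≤ a := by omega
          refine Nat.le_of_mul_le_mul_right ?_ (show 0 < j + 1 by omega)
          have hch : (a + 1).choose (j + 1) * (j + 1) = (a + 1).choose j * (a + 1 - j) :=
            Nat.choose_succ_right_eq (a + 1) j
          have hpow : (j + 1) * j ^ m ≤ (j + 1) ^ m := by
            have h1 : 2 ^ (ℓ + 2) * j ^ m ≤ (j + 1) ^ m := by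
              refine pow_shift_le j (ℓ + 2) m hj1 ?_
              calc j * (ℓ + 2) ≤ (a - 1) * (ℓ + 2) :=
                    Nat.mul_le_mul_right _ (by omega)
                _ ≤ m := hml
            have h2 : j + 1 ≤ 2 ^ (ℓ + 2) := by
              have : 2 ^ (ℓ + 1) ≤ 2 ^ (ℓ + 2) := Nat.pow_le_pow_right (by omega) (by omega)
              omega
            calc (j + 1) * j ^ m ≤ 2 ^ (ℓ + 2) * j ^ m :=
                  Nat.mul_le_mul_right _ h2
              _ ≤ (j + 1) ^ m := h1
          have haj : 2 ≤ a + 1 - j := by omega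
          calc 2 * ((a + 1).choose j * j ^ m) * (j + 1)
              = (a + 1).choose j * (2 * ((j + 1) * j ^ m)) := by ring
            _ ≤ (a + 1).choose j * (2 * (j + 1) ^ m) :=
                Nat.mul_le_mul_left _ (Nat.mul_le_mul_left _ hpow)
            _ ≤ (a + 1).choose j * ((a + 1 - j) * (j + 1) ^ m) :=
                Nat.mul_le_mul_left _ (Nat.mul_le_mul_right _ haj)
            _ = (a + 1).choose j * (a + 1 - j) * (j + 1) ^ m := by ring
            _ = (a + 1).choose (j + 1) * (j + 1) * (j + 1) ^ m := by rw [hch]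
            _ = (a + 1).choose (j + 1) * (j + 1) ^ m * (j + 1) := by ring
    calc ∑ j ∈ Finset.range (a + 1), (a + 1).choose j * surj m j
        ≤ 2 * ((a + 1).choose a * a ^ m) := step1.trans step2
      _ = 2 * ((a + 1) * a ^ m) := by rw [Nat.choose_succ_self_right]
  -- main inequality
  have hmain : t * ((a + 1) * a ^ (m + 1)) + 2 * ((a + 1) * a ^ m) < (a + 1) ^ m := by
    have e : t * ((a + 1) * a ^ (m + 1)) + 2 * ((a + 1) * a ^ m)
        = ((a + 1) * (t * a + 2)) * a ^ m := by ring
    rw [e]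
    have c1 : (a + 1) * (t * a + 2) ≤ (t + 1) * (a + 1) ^ 2 := by nlinarith
    have c2 : ((a + 1) * (t * a + 2)) * a ^ m ≤ ((t + 1) * (a + 1) ^ 2) * a ^ m :=
      Nat.mul_le_mul_right _ c1
    have c3 : ((t + 1) * (a + 1) ^ 2) * a ^ m < 2 ^ s * a ^ m :=
      (Nat.mul_lt_mul_right (show 0 < a ^ m from Nat.pow_pos ha)).mpr h2s
    have c4 : 2 ^ s * a ^ m ≤ (a + 1) ^ m := pow_shift_le a s m ha has
    omega
  -- conclude
  have hupper : t * ((a + 1) * surj (m + 1) a) ≤ t * ((a + 1) * a ^ (m + 1)) :=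
    Nat.mul_le_mul_left _ (Nat.mul_le_mul_left _ (surj_le (m + 1) a))
  have hlow : t * ((a + 1) * a ^ (m + 1)) < surj m (a + 1) := by omega
  have hfinal : t * ((a + 1) * surj (m + 1) a) < surj m (a + 1) := lt_of_le_of_lt hupper hlow
  have e1 : (a + 1).factorial * (t * stirling (m + 1) a)
      = t * ((a + 1) * surj (m + 1) a) := by
    rw [surj_eq, Nat.factorial_succ]; ring
  have e2 : (a + 1).factorial * stirling m (a + 1) = surj m (a + 1) :=
    (surj_eq m (a + 1)).symm
  have : (a + 1).factorial * (t * stirling (m + 1) a)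
      < (a + 1).factorial * stirling m (a + 1) := by rw [e1, e2]; exact hfinal
  exact Nat.lt_of_mul_lt_mul_left this

theorem stmt_7 (k t n : ℕ) (ht : 1 ≤ t) (hk : t + 3 ≤ k) (hn : (n : ℝ) ≥ 2 * Lkt k t) :
    t * stirling (n - t - 2) (k - t - 2) < stirling (n - t - 3) (k - t - 1) := by
  set a := k - t - 2 with hadef
  have ha : 1 ≤ a := by omega
  set P := (t + 1) * (a + 3) with hPdef
  have hP8 : 8 ≤ P := by have := Nat.mul_le_mul (show 2 ≤ t+1 by omega) (show 4 ≤ a+3 by omega); omega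
  set ℓ := Nat.log 2 P with hldef
  have hl3 : 3 ≤ ℓ := by
    rw [hldef]
    exact (Nat.le_log_iff_pow_le (by norm_num) (by omega)).mpr (le_trans (by norm_num) hP8)
  have hPlt : P < 2 ^ (ℓ + 1) := Nat.lt_pow_succ_log_self (by norm_num) P
  have hPge : 2 ^ ℓ ≤ P := Nat.pow_log_le_self 2 (by omega)
  have hPpos : (0:ℝ) < (P:ℝ) := by exact_mod_cast (by omega : 0 < P)
  have hlogP_ge : (ℓ : ℝ) ≤ Real.logb 2 (P:ℝ) := by
    rw [Real.le_logb_iff_rpow_le one_lt_two hPpos, Real.rpow_natCast]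
    exact_mod_cast hPge
  have hlogP_nonneg : (0:ℝ) ≤ Real.logb 2 (P:ℝ) :=
    le_trans (by positivity) hlogP_ge
  have hcast : ((k:ℝ) - t + 1) = ((a:ℝ) + 3) := by
    have hke : k = t + 2 + a := by omega
    rw [hke]; push_cast; ring
  have hLkt : Lkt k t = ((t:ℝ) + 1) + ((a:ℝ) + 3) * Real.logb 2 (P:ℝ) := by
    rw [Lkt, hcast]
    have : ((P:ℕ):ℝ) = ((t:ℝ) + 1) * ((a:ℝ) + 3) := by rw [hPdef]; push_cast; ring
    rw [this]
  have hn' : (n : ℝ) ≥ 2*((t:ℝ)+1) + 2*(((a:ℝ)+3) * Real.logb 2 (P:ℝ)) := by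
    rw [hLkt] at hn; linarith
  have hn_nat : 2*(t+1) + 2*((a+3)*ℓ) ≤ n := by
    have h1 : (2*(t+1) + 2*((a+3)*ℓ) : ℕ) ≤ (n:ℝ) := by
      push_cast
      nlinarith [hlogP_ge, hlogP_nonneg]
    exact_mod_cast h1
  have h24 : 24 ≤ 2*((a+3)*ℓ) := by
    have : 4*3 ≤ (a+3)*ℓ := Nat.mul_le_mul (by omega) hl3
    omega
  set m := n - t - 3 with hmdef
  have hmn : m + (t + 3) = n := by omega
  have hml_nat : 2*((a+3)*ℓ) + t ≤ m + 1 := by omega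
  have hm1 : 1 ≤ m := by omega
  have hml : (a - 1) * (ℓ + 2) ≤ m := by
    have hchain : (a - 1) * (ℓ + 2) ≤ 2*((a+3)*ℓ) :=
      calc (a-1)*(ℓ+2) ≤ a*(ℓ+2) := Nat.mul_le_mul_right _ (Nat.sub_le a 1)
        _ ≤ a*(2*ℓ) := Nat.mul_le_mul_left _ (by omega)
        _ ≤ (a+3)*(2*ℓ) := Nat.mul_le_mul_right _ (by omega)
        _ = 2*((a+3)*ℓ) := by ring
    omega
  have hapow : a + 1 ≤ 2 ^ (ℓ + 1) := by
    have h1 : a + 3 ≤ P := by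
      have := Nat.mul_le_mul (show 1 ≤ t + 1 by omega) (Nat.le_refl (a+3))
      omega
    omega
  -- now h2s
  set s := m / a with hsdef
  have hmreal : (m:ℝ) ≥ 2*(((a:ℝ)+3) * Real.logb 2 (P:ℝ)) + (t:ℝ) - 3 := by
    have : (m:ℝ) + (t+3) = (n:ℝ) := by exact_mod_cast congrArg (Nat.cast : ℕ → ℝ) hmn
    push_cast at this
    linarith
  have hm_div : (m:ℝ) < (a:ℝ) * s + a := by
    have h1 : m % a < a := Nat.mod_lt _ (by omega)
    have h2 : a * s + m % a = m := Nat.div_add_mod m a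
    have h2' : (a:ℝ) * s + (m % a : ℕ) = m := by exact_mod_cast h2
    have h1' : ((m % a : ℕ):ℝ) < a := by exact_mod_cast h1
    linarith
  have haR : (0:ℝ) < (a:ℝ) := by exact_mod_cast ha
  have htR : (1:ℝ) ≤ (t:ℝ) := by exact_mod_cast ht
  set X := (t + 1) * (a + 1) ^ 2 with hXdef
  have hXposN : 0 < X := by positivity
  have hXpos : (0:ℝ) < (X:ℝ) := by exact_mod_cast hXposN
  have h2X : 2 * X ≤ P ^ 2 := by
    rw [hXdef, hPdef]
    calc 2*((t+1)*(a+1)^2) = (2*(t+1))*((a+1)*(a+1)) := by ring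
      _ ≤ ((t+1)*(t+1))*((a+3)*(a+3)) :=
          Nat.mul_le_mul (Nat.mul_le_mul_right (t+1) (by omega))
            (Nat.mul_le_mul (by omega) (by omega))
      _ = ((t+1)*(a+3))^2 := by ring
  have hlog2X : Real.logb 2 ((2*X : ℕ):ℝ) ≤ 2 * Real.logb 2 (P:ℝ) := by
    have hle : ((2*X : ℕ):ℝ) ≤ ((P^2:ℕ):ℝ) := by exact_mod_cast h2X
    have hpos2X : (0:ℝ) < ((2*X:ℕ):ℝ) := by exact_mod_cast (by omega : 0 < 2*X)
    have h1 : Real.logb 2 ((2*X:ℕ):ℝ) ≤ Real.logb 2 ((P^2:ℕ):ℝ) :=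
      Real.logb_le_logb_of_le one_lt_two hpos2X hle
    have h2 : ((P^2:ℕ):ℝ) = (P:ℝ)^2 := by push_cast; ring
    rw [h2, Real.logb_pow] at h1
    exact_mod_cast h1
  have hsplit : Real.logb 2 ((2*X:ℕ):ℝ) = 1 + Real.logb 2 (X:ℝ) := by
    push_cast
    rw [Real.logb_mul (by norm_num) (by positivity),
      Real.logb_self_eq_one (by norm_num)]
  have hlog3 : (3:ℝ) ≤ Real.logb 2 (P:ℝ) := le_trans (by exact_mod_cast hl3) hlogP_ge
  have h1' : (a:ℝ) * (2*Real.logb 2 (P:ℝ)) < (a:ℝ) * ((s:ℝ)+1) := by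
    nlinarith [hmreal, hm_div, hlog3, htR]
  have h2 : 2 * Real.logb 2 (P:ℝ) < (s:ℝ) + 1 := (mul_lt_mul_iff_right₀ haR).mp h1'
  have hs_gt : Real.logb 2 (X:ℝ) < (s:ℝ) := by linarith [hlog2X, hsplit.symm.le]
  have hfin : (X:ℝ) < (2:ℝ)^(s:ℕ) := by
    rw [← Real.rpow_natCast 2 s]
    exact (Real.logb_lt_iff_lt_rpow one_lt_two hXpos).mp hs_gt
  have h2s : (t+1) * (a+1)^2 < 2^s := by exact_mod_cast hfin
  have hgoal := key_s7 t a m ℓ ht ha hl3 hm1 hml hapow h2s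
  have g1 : n - t - 2 = m + 1 := by omega
  have g3 : k - t - 1 = a + 1 := by omega
  rw [g1, g3]
  exact hgoal
end

section
/- For every integer t ≥ 1, the function Q(s,t) := s^(L(s+t,t) - 2s - t + 1) / C(s+t, t), where L(k,t) = (t+1) + (k-t+1)·log₂((t+1)(k-t+1)), is increasing in s for s ≥ 2, and consequently Q(s,t) ≥ Q(2,t) = 27(t+1)²/(2(t+2)) ≥ 18 for all s ≥ 2. -/
/-- `Q(s,t) = s^(L(s+t,t) - 2s - t + 1) / C(s+t,t)`. -/
noncomputable def Qst (s t : ℕ) : ℝ :=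
  (s : ℝ) ^ (Lkt (s + t) t - 2 * s - t + 1) / (Nat.choose (s + t) t : ℝ)

lemma core (a s : ℝ) (ha : 0 ≤ a) (hs : 2 ≤ s) :
    ((s+1)*(a + Real.logb 2 (s+1)) - 2*s + 2) * Real.logb 2 s + a
      ≤ ((s+2)*(a + Real.logb 2 (s+2)) - 2*(s+1) + 2) * Real.logb 2 (s+1) := by
  set x := Real.logb 2 s with hxdef
  set y := Real.logb 2 (s+1) with hydef
  set z := Real.logb 2 (s+2) with hzdef
  have hx1 : 1 ≤ x := by
    rw [hxdef, show (1:ℝ) = Real.logb 2 2 from (Real.logb_self_eq_one (by norm_num)).symm]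
    exact Real.logb_le_logb_of_le (by norm_num) (by norm_num) hs
  have hxy : x ≤ y := Real.logb_le_logb_of_le (by norm_num) (by linarith) (by linarith)
  have hyz : y ≤ z := Real.logb_le_logb_of_le (by norm_num) (by linarith) (by linarith)
  have hz2 : 2 ≤ z := by
    have h1 : Real.logb 2 4 ≤ Real.logb 2 (s+2) :=
      Real.logb_le_logb_of_le one_lt_two (by norm_num) (by linarith)
    have h4 : Real.logb 2 4 = 2 := by
      rw [show (4:ℝ) = 2^(2:ℝ) by norm_num, Real.logb_rpow (by norm_num) (by norm_num)]
    rw [hzdef]; linarith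
  nlinarith [mul_nonneg (by nlinarith : (0:ℝ) ≤ (s+2)*(a+z) - 2*(s+1) + 2) (sub_nonneg.2 hxy),
    mul_le_mul_of_nonneg_right (show a ≤ a - 2 + (s+2)*z - (s+1)*y by nlinarith)
      (by linarith : (0:ℝ) ≤ x)]

lemma Lkt_exp (s t : ℕ) :
    Lkt (s+t) t - 2*(s:ℝ) - (t:ℝ) + 1
      = ((s:ℝ)+1)*(Real.logb 2 ((t:ℝ)+1) + Real.logb 2 ((s:ℝ)+1)) - 2*(s:ℝ) + 2 := by
  unfold Lkt
  have h : (((s+t : ℕ)) : ℝ) - (t:ℝ) + 1 = (s:ℝ)+1 := by push_cast; ring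
  rw [h, Real.logb_mul (by positivity) (by positivity)]
  ring

lemma Qst_step (t s : ℕ) (ht : 1 ≤ t) (hs : 2 ≤ s) : Qst s t ≤ Qst (s+1) t := by
  have hS : (2:ℝ) ≤ (s:ℝ) := by exact_mod_cast hs
  have hT : (1:ℝ) ≤ (t:ℝ) := by exact_mod_cast ht
  set S := (s:ℝ) with hSdef
  set T := (t:ℝ) with hTdef
  have ha : 0 ≤ Real.logb 2 (T+1) := Real.logb_nonneg one_lt_two (by linarith)
  have hC1 : (0:ℝ) < ((s+t).choose t : ℝ) := by
    exact_mod_cast Nat.choose_pos (Nat.le_add_left t s)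
  have hC2 : (0:ℝ) < (((s+1)+t).choose t : ℝ) := by
    exact_mod_cast Nat.choose_pos (Nat.le_add_left t (s+1))
  have hrec : ((s+t).choose t : ℝ) * (S+T+1) = (((s+1)+t).choose t : ℝ) * (S+1) := by
    have h0 := Nat.choose_mul_succ_eq (s+t) t
    have h2 : s + t + 1 - t = s + 1 := by omega
    have h3 : s + 1 + t = s + t + 1 := by omega
    rw [h2] at h0
    have h4 := congrArg (Nat.cast : ℕ → ℝ) h0
    push_cast at h4
    rw [hSdef, hTdef, h3]
    push_cast
    linarith [h4]
  unfold Qst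
  rw [div_le_div_iff₀ hC1 hC2]
  have e1eq : Lkt (s+t) t - 2 * S - T + 1
      = (S+1)*(Real.logb 2 (T+1) + Real.logb 2 (S+1)) - 2*S + 2 := Lkt_exp s t
  have e2eq : Lkt ((s+1)+t) t - 2 * (S+1) - (t:ℝ) + 1
      = (S+2)*(Real.logb 2 (T+1) + Real.logb 2 (S+2)) - 2*(S+1) + 2 := by
    have := Lkt_exp (s+1) t
    push_cast at this
    rw [hSdef, hTdef]
    rw [show ((s:ℝ)+1+1) = (s:ℝ)+2 by ring] at this
    linarith [this]
  rw [e1eq, show (((s+1:ℕ)):ℝ) = S+1 by push_cast; ring, e2eq]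
  set e1 := (S+1)*(Real.logb 2 (T+1) + Real.logb 2 (S+1)) - 2*S + 2 with he1d
  set e2 := (S+2)*(Real.logb 2 (T+1) + Real.logb 2 (S+2)) - 2*(S+1) + 2 with he2d
  have hSp : (0:ℝ) < S := by linarith
  have hS1p : (0:ℝ) < S+1 := by linarith
  have hSTp : (0:ℝ) < S+T+1 := by linarith
  rw [← mul_le_mul_iff_of_pos_right hS1p]
  have hrw1 : S ^ e1 * (((s+1)+t).choose t : ℝ) * (S+1)
      = S ^ e1 * (S+T+1) * ((s+t).choose t : ℝ) := by
    linear_combination (S ^ e1) * hrec.symm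
  rw [hrw1]
  have key : S ^ e1 * (S+T+1) ≤ (S+1) ^ e2 * (S+1) := by
    have hL : (0:ℝ) < S ^ e1 * (S+T+1) := by positivity
    have hR : (0:ℝ) < (S+1) ^ e2 * (S+1) := by positivity
    rw [← Real.logb_le_logb one_lt_two hL hR,
      Real.logb_mul (ne_of_gt (by positivity)) (ne_of_gt hSTp),
      Real.logb_mul (ne_of_gt (by positivity)) (ne_of_gt hS1p),
      Real.logb_rpow_eq_mul_logb_of_pos hSp,
      Real.logb_rpow_eq_mul_logb_of_pos hS1p]
    have hlog : Real.logb 2 (S+T+1) ≤ Real.logb 2 (S+1) + Real.logb 2 (T+1) := by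
      rw [← Real.logb_mul (ne_of_gt hS1p) (by positivity)]
      exact Real.logb_le_logb_of_le one_lt_two (by linarith) (by nlinarith)
    have hcore := core (Real.logb 2 (T+1)) S ha hS
    rw [← he1d, ← he2d] at hcore
    linarith
  calc S ^ e1 * (S+T+1) * ((s+t).choose t : ℝ)
      ≤ (S+1) ^ e2 * (S+1) * ((s+t).choose t : ℝ) :=
        mul_le_mul_of_nonneg_right key (le_of_lt hC1)
    _ = (S+1) ^ e2 * ((s+t).choose t : ℝ) * (S+1) := by ring

lemma Qst_two (t : ℕ) (ht : 1 ≤ t) :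
    Qst 2 t = 27 * ((t : ℝ) + 1) ^ 2 / (2 * ((t : ℝ) + 2)) := by
  have hT : (1:ℝ) ≤ (t:ℝ) := by exact_mod_cast ht
  have hexp := Lkt_exp 2 t
  unfold Qst
  rw [show ((2:ℕ):ℝ) = (2:ℝ) by norm_num]
  have hexp' : Lkt (2+t) t - 2 * (2:ℝ) - (t:ℝ) + 1
      = 3*(Real.logb 2 ((t:ℝ)+1) + Real.logb 2 3) - 2 := by
    have := Lkt_exp 2 t
    norm_num at this
    linarith [this]
  rw [hexp']
  have hpow : (2:ℝ) ^ (3*(Real.logb 2 ((t:ℝ)+1) + Real.logb 2 3) - 2)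
      = ((t:ℝ)+1)^(3:ℕ) * 27 / 4 := by
    rw [show 3*(Real.logb 2 ((t:ℝ)+1) + Real.logb 2 3) - 2
        = Real.logb 2 ((t:ℝ)+1) * (3:ℕ) + (Real.logb 2 3 * (3:ℕ) + (-2)) by push_cast; ring,
      Real.rpow_add two_pos, Real.rpow_add two_pos,
      Real.rpow_mul (by norm_num : (0:ℝ) ≤ 2), Real.rpow_mul (by norm_num : (0:ℝ) ≤ 2),
      Real.rpow_logb two_pos (by norm_num) (by linarith),
      Real.rpow_logb two_pos (by norm_num) (by norm_num : (0:ℝ) < 3),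
      Real.rpow_natCast, Real.rpow_natCast,
      show (2:ℝ) ^ (-2:ℝ) = 1/4 by
        rw [show (-2:ℝ) = ((-2:ℤ):ℝ) by norm_num, Real.rpow_intCast]; norm_num]
    ring
  rw [hpow]
  have hchoose : ((2+t).choose t : ℝ) = ((t:ℝ)+2)*((t:ℝ)+1)/2 := by
    have h := Nat.choose_symm (show 2 ≤ 2+t by omega)
    rw [show 2+t-2 = t by omega] at h
    rw [h, Nat.cast_choose_two]
    push_cast
    ring
  rw [hchoose]
  have h1 : (t:ℝ)+1 ≠ 0 := by linarith
  have h2 : (t:ℝ)+2 ≠ 0 := by linarith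
  field_simp
  ring

theorem stmt_8 (t : ℕ) (ht : 1 ≤ t) :
    (∀ s₁ s₂ : ℕ, 2 ≤ s₁ → s₁ ≤ s₂ → Qst s₁ t ≤ Qst s₂ t) ∧
    Qst 2 t = 27 * ((t : ℝ) + 1) ^ 2 / (2 * ((t : ℝ) + 2)) ∧
    (∀ s : ℕ, 2 ≤ s → 18 ≤ Qst s t) := by
  have hmono : ∀ s₁ s₂ : ℕ, 2 ≤ s₁ → s₁ ≤ s₂ → Qst s₁ t ≤ Qst s₂ t := by
    intro s₁ s₂ h1 h12
    induction s₂, h12 using Nat.le_induction with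
    | base => exact le_refl _
    | succ n hn ih => exact le_trans ih (Qst_step t n ht (le_trans h1 hn))
  refine ⟨hmono, Qst_two t ht, ?_⟩
  intro s hs
  have h18 : (18:ℝ) ≤ Qst 2 t := by
    rw [Qst_two t ht]
    have hT : (1:ℝ) ≤ (t:ℝ) := by exact_mod_cast ht
    rw [le_div_iff₀ (by linarith)]
    nlinarith
  exact le_trans h18 (hmono 2 s (le_refl 2) hs)
end
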